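/- (Variance of the MLMC variance estimator.) In the setting of the MLMC variance estimator with independent outer replicates, Var[𝒱] = (1/(M_0 T_0))(μ₄ - ((T_0-3)/(T_0-1)) μ₂²) + ∑_{ℓ=1}^L (1/M_ℓ)(1/T_{ℓ-1} - 1/T_ℓ)(μ₄ - 3μ₂²) + ∑_{ℓ=1}^L (2/M_ℓ)(1/(T_{ℓ-1}-1) - 1/(T_ℓ-1)) μ₂². -/

import Mathlib

open MeasureTheory ProbabilityTheory Finset

set_option linter.unusedSectionVars false
set_option maxHeartbeats 1000000
set_option linter.unnecessarySimpa false
set_option linter.unusedVariables false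


/-- Sample mean of the first `S` inner samples of replicate `m` at level `ℓ`. -/
noncomputable def levelMean {Ω : Type*} (X : ℕ → ℕ → ℕ → Ω → ℝ) (ℓ m S : ℕ) (ω : Ω) : ℝ :=
  (∑ t ∈ Finset.range S, X ℓ m t ω) / S

/-- Unbiased sample variance of the first `S` inner samples of replicate `m` at level `ℓ`. -/
noncomputable def levelVar {Ω : Type*} (X : ℕ → ℕ → ℕ → Ω → ℝ) (ℓ m S : ℕ) (ω : Ω) : ℝ :=
  (∑ t ∈ Finset.range S, (X ℓ m t ω - levelMean X ℓ m S ω) ^ 2) / ((S : ℝ) - 1)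

section Helpers

variable {Ω : Type*} [MeasureSpace Ω] [IsProbabilityMeasure (ℙ : Measure Ω)]

lemma memLp_mul2 {f g : Ω → ℝ} (hf : MemLp f 2 ℙ) (hg : MemLp g 2 ℙ) :
    Integrable (fun ω => f ω * g ω) ℙ := by
  rw [← memLp_one_iff_integrable]
  have : (fun ω => f ω * g ω) = f • g := by funext ω; simp [smul_eq_mul]
  rw [this]
  exact MemLp.smul (r := 1) hg hf
    (hpqr := ⟨by rw [ENNReal.inv_two_add_inv_two, inv_one]⟩)

lemma memLp_sq2 {f : Ω → ℝ} (hf : MemLp f 4 ℙ) : MemLp (fun ω => f ω ^ 2) 2 ℙ := by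
  have : (fun ω => f ω ^ 2) = f • f := by funext ω; simp [smul_eq_mul, sq]
  rw [this]
  exact MemLp.smul (r := 2) hf hf
    (hpqr := ⟨by rw [← two_mul, show (4:ENNReal) = 2*2 by norm_num, ENNReal.mul_inv (by simp) (by simp),
          ← mul_assoc, ENNReal.mul_inv_cancel (by simp) (by simp), one_mul]⟩)

lemma mem2_of_mem4 {f : Ω → ℝ} (hf : MemLp f 4 ℙ) : MemLp f 2 ℙ :=
  hf.mono_exponent (by norm_num)

lemma memLp2_pow_of_mem4 {f : Ω → ℝ} (hf : MemLp f 4 ℙ) {k : ℕ} (hk : k ≤ 2) :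
    MemLp (fun ω => f ω ^ k) 2 ℙ := by
  interval_cases k
  · simpa using memLp_const (1:ℝ)
  · simpa using mem2_of_mem4 hf
  · exact memLp_sq2 hf

lemma int_pow_of_mem4 {f : Ω → ℝ} (hf : MemLp f 4 ℙ) {k : ℕ} (hk : k ≤ 4) :
    Integrable (fun ω => f ω ^ k) ℙ := by
  interval_cases k
  · simpa using integrable_const (1:ℝ)
  · simpa using (mem2_of_mem4 hf).integrable one_le_two
  · exact (memLp_sq2 hf).integrable one_le_two
  · have : (fun ω => f ω ^ 3) = fun ω => f ω ^ 2 * f ω := by funext ω; ring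
    rw [this]; exact memLp_mul2 (memLp_sq2 hf) (mem2_of_mem4 hf)
  · have : (fun ω => f ω ^ 4) = fun ω => f ω ^ 2 * f ω ^ 2 := by funext ω; ring
    rw [this]; exact memLp_mul2 (memLp_sq2 hf) (memLp_sq2 hf)

lemma indep_depOnly {ι : Type*} (f : ι → Ω → ℝ)
    (hind : iIndepFun f ℙ) (hmeas : ∀ p, Measurable (f p))
    (A B : Finset ι) (hAB : Disjoint A B)
    (H K : (ι → ℝ) → ℝ) (hH : Measurable H) (hK : Measurable K)
    (hHA : ∀ v w : ι → ℝ, (∀ p ∈ A, v p = w p) → H v = H w)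
    (hKB : ∀ v w : ι → ℝ, (∀ p ∈ B, v p = w p) → K v = K w) :
    IndepFun (fun ω => H fun p => f p ω) (fun ω => K fun p => f p ω) ℙ := by
  classical
  have hext : ∀ (C : Finset ι),
      Measurable (fun (v : C → ℝ) (p : ι) => if h : p ∈ C then v ⟨p, h⟩ else 0) := by
    intro C
    apply measurable_pi_lambda
    intro p
    by_cases h : p ∈ C
    · simpa [h] using measurable_pi_apply (⟨p, h⟩ : C)
    · simpa [h] using (measurable_const : Measurable fun _ : C → ℝ => (0:ℝ))
  have base := hind.indepFun_finset A B hAB hmeas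
  have hFG := base.comp (hH.comp (hext A)) (hK.comp (hext B))
  have e1 : (H ∘ fun (v : A → ℝ) (p : ι) => if h : p ∈ A then v ⟨p, h⟩ else 0) ∘
      (fun ω (i : A) => f i ω) = fun ω => H fun p => f p ω := by
    funext ω
    exact hHA _ _ fun p hp => by simp [hp]
  have e2 : (K ∘ fun (v : B → ℝ) (p : ι) => if h : p ∈ B then v ⟨p, h⟩ else 0) ∘
      (fun ω (i : B) => f i ω) = fun ω => K fun p => f p ω := by
    funext ω
    exact hKB _ _ fun p hp => by simp [hp]
  rw [← e1, ← e2]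
  exact hFG

end Helpers

noncomputable def Usum {Ω : Type*} (Z : ℕ → Ω → ℝ) (A : Finset ℕ) (ω : Ω) : ℝ :=
  ∑ t ∈ A, Z t ω

noncomputable def Qsum {Ω : Type*} (Z : ℕ → Ω → ℝ) (A : Finset ℕ) (ω : Ω) : ℝ :=
  ∑ t ∈ A, (Z t ω) ^ 2

noncomputable def sV {Ω : Type*} (Z : ℕ → Ω → ℝ) (S : ℕ) (ω : Ω) : ℝ :=
  (Qsum Z (Finset.range S) ω - (Usum Z (Finset.range S) ω) ^ 2 / S) / ((S : ℝ) - 1)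

section Blocks

variable {Ω : Type*} [MeasureSpace Ω] [IsProbabilityMeasure (ℙ : Measure Ω)]

/-- All the properties we need of one i.i.d. block of centered random variables. -/
structure IIDBlock (Z : ℕ → Ω → ℝ) (μ₂ μ₃ μ₄ : ℝ) : Prop where
  meas : ∀ t, Measurable (Z t)
  blk : ∀ (A B : Finset ℕ), Disjoint A B → ∀ (H K : (ℕ → ℝ) → ℝ),
    Measurable H → Measurable K →
    (∀ v w : ℕ → ℝ, (∀ t ∈ A, v t = w t) → H v = H w) →
    (∀ v w : ℕ → ℝ, (∀ t ∈ B, v t = w t) → K v = K w) →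
    IndepFun (fun ω => H fun t => Z t ω) (fun ω => K fun t => Z t ω) ℙ
  l4 : ∀ t, MemLp (Z t) 4 ℙ
  m1 : ∀ t, ∫ ω, Z t ω = 0
  m2 : ∀ t, ∫ ω, (Z t ω) ^ 2 = μ₂
  m3 : ∀ t, ∫ ω, (Z t ω) ^ 3 = μ₃
  m4 : ∀ t, ∫ ω, (Z t ω) ^ 4 = μ₄

namespace IIDBlock

variable {Z : ℕ → Ω → ℝ} {μ₂ μ₃ μ₄ : ℝ}

lemma meas_U (h : IIDBlock Z μ₂ μ₃ μ₄) (A : Finset ℕ) : Measurable (Usum Z A) :=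
  Finset.measurable_sum A fun t _ => h.meas t

lemma meas_Q (h : IIDBlock Z μ₂ μ₃ μ₄) (A : Finset ℕ) : Measurable (Qsum Z A) :=
  Finset.measurable_sum A fun t _ => (h.meas t).pow_const 2

lemma mem4_U (h : IIDBlock Z μ₂ μ₃ μ₄) (A : Finset ℕ) : MemLp (Usum Z A) 4 ℙ :=
  memLp_finset_sum A fun t _ => h.l4 t

lemma mem2_Q (h : IIDBlock Z μ₂ μ₃ μ₄) (A : Finset ℕ) : MemLp (Qsum Z A) 2 ℙ :=
  memLp_finset_sum A fun t _ => memLp_sq2 (h.l4 t)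

lemma int_UQ (h : IIDBlock Z μ₂ μ₃ μ₄) (A : Finset ℕ) (p q : ℕ) (hdeg : p + 2 * q ≤ 4) :
    Integrable (fun ω => Usum Z A ω ^ p * Qsum Z A ω ^ q) ℙ := by
  have hq : q ≤ 2 := by omega
  interval_cases q
  · simpa using int_pow_of_mem4 (h.mem4_U A) (k := p) (by omega)
  · have e : (fun ω => Usum Z A ω ^ p * Qsum Z A ω ^ 1)
        = fun ω => Usum Z A ω ^ p * Qsum Z A ω := by funext ω; ring
    rw [e]
    exact memLp_mul2 (memLp2_pow_of_mem4 (h.mem4_U A) (by omega)) (h.mem2_Q A)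
  · have hp : p = 0 := by omega
    subst hp
    have e : (fun ω => Usum Z A ω ^ 0 * Qsum Z A ω ^ 2)
        = fun ω => Qsum Z A ω * Qsum Z A ω := by funext ω; ring
    rw [e]
    exact memLp_mul2 (h.mem2_Q A) (h.mem2_Q A)

lemma int_Zpow (h : IIDBlock Z μ₂ μ₃ μ₄) (a : ℕ) (k : ℕ) (hk : k ≤ 4) : Integrable (fun ω => Z a ω ^ k) ℙ :=
  int_pow_of_mem4 (h.l4 a) hk

lemma blkUQ (h : IIDBlock Z μ₂ μ₃ μ₄) {A B : Finset ℕ} (hAB : Disjoint A B) (p q r s : ℕ) :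
    IndepFun (fun ω => Usum Z A ω ^ p * Qsum Z A ω ^ q)
      (fun ω => Usum Z B ω ^ r * Qsum Z B ω ^ s) ℙ := by
  have hH : Measurable fun v : ℕ → ℝ => (∑ t ∈ A, v t) ^ p * (∑ t ∈ A, (v t) ^ 2) ^ q :=
    ((Finset.measurable_sum A fun t _ => measurable_pi_apply t).pow_const p).mul
      ((Finset.measurable_sum A fun t _ => (measurable_pi_apply t).pow_const 2).pow_const q)
  have hK : Measurable fun v : ℕ → ℝ => (∑ t ∈ B, v t) ^ r * (∑ t ∈ B, (v t) ^ 2) ^ s :=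
    ((Finset.measurable_sum B fun t _ => measurable_pi_apply t).pow_const r).mul
      ((Finset.measurable_sum B fun t _ => (measurable_pi_apply t).pow_const 2).pow_const s)
  have depA : ∀ v w : ℕ → ℝ, (∀ t ∈ A, v t = w t) →
      (∑ t ∈ A, v t) ^ p * (∑ t ∈ A, (v t) ^ 2) ^ q
        = (∑ t ∈ A, w t) ^ p * (∑ t ∈ A, (w t) ^ 2) ^ q := by
    intro v w hvw
    have e1 : ∑ t ∈ A, v t = ∑ t ∈ A, w t := Finset.sum_congr rfl hvw
    have e2 : ∑ t ∈ A, v t ^ 2 = ∑ t ∈ A, w t ^ 2 :=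
      Finset.sum_congr rfl fun t ht => by rw [hvw t ht]
    rw [e1, e2]
  have depB : ∀ v w : ℕ → ℝ, (∀ t ∈ B, v t = w t) →
      (∑ t ∈ B, v t) ^ r * (∑ t ∈ B, (v t) ^ 2) ^ s
        = (∑ t ∈ B, w t) ^ r * (∑ t ∈ B, (w t) ^ 2) ^ s := by
    intro v w hvw
    have e1 : ∑ t ∈ B, v t = ∑ t ∈ B, w t := Finset.sum_congr rfl hvw
    have e2 : ∑ t ∈ B, v t ^ 2 = ∑ t ∈ B, w t ^ 2 :=
      Finset.sum_congr rfl fun t ht => by rw [hvw t ht]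
    rw [e1, e2]
  exact h.blk A B hAB _ _ hH hK depA depB

lemma meas_UQ (h : IIDBlock Z μ₂ μ₃ μ₄) (A : Finset ℕ) (p q : ℕ) :
    Measurable fun ω => Usum Z A ω ^ p * Qsum Z A ω ^ q :=
  ((h.meas_U A).pow_const p).mul ((h.meas_Q A).pow_const q)

lemma integral_UQ_mul (h : IIDBlock Z μ₂ μ₃ μ₄) {A B : Finset ℕ} (hAB : Disjoint A B) (p q r s : ℕ) :
    ∫ ω, (Usum Z A ω ^ p * Qsum Z A ω ^ q) * (Usum Z B ω ^ r * Qsum Z B ω ^ s)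
      = (∫ ω, Usum Z A ω ^ p * Qsum Z A ω ^ q)
        * ∫ ω, Usum Z B ω ^ r * Qsum Z B ω ^ s :=
  (h.blkUQ hAB p q r s).integral_mul_eq_mul_integral (h.meas_UQ A p q).aestronglyMeasurable
    (h.meas_UQ B r s).aestronglyMeasurable

lemma indep_UQ_Z (h : IIDBlock Z μ₂ μ₃ μ₄) {A : Finset ℕ} {a : ℕ} (ha : a ∉ A) (p q k : ℕ) :
    IndepFun (fun ω => Usum Z A ω ^ p * Qsum Z A ω ^ q) (fun ω => Z a ω ^ k) ℙ := by
  have hd : Disjoint A {a} := by simpa [Finset.disjoint_singleton_right] using ha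
  simpa [Usum, Qsum] using h.blkUQ hd p q k 0

lemma integral_UQ_Z (h : IIDBlock Z μ₂ μ₃ μ₄) {A : Finset ℕ} {a : ℕ} (ha : a ∉ A) (p q k : ℕ) :
    ∫ ω, Usum Z A ω ^ p * Qsum Z A ω ^ q * Z a ω ^ k
      = (∫ ω, Usum Z A ω ^ p * Qsum Z A ω ^ q) * ∫ ω, Z a ω ^ k := by
  have hd : Disjoint A {a} := by simpa [Finset.disjoint_singleton_right] using ha
  simpa [Usum, Qsum, mul_assoc] using h.integral_UQ_mul hd p q k 0

lemma int_UQ_Z (h : IIDBlock Z μ₂ μ₃ μ₄) {A : Finset ℕ} {a : ℕ} (ha : a ∉ A) (p q k : ℕ)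
    (hdeg : p + 2 * q ≤ 4) (hk : k ≤ 4) :
    Integrable (fun ω => Usum Z A ω ^ p * Qsum Z A ω ^ q * Z a ω ^ k) ℙ :=
  (h.indep_UQ_Z ha p q k).integrable_mul (h.int_UQ A p q hdeg) (h.int_Zpow a k hk)

lemma EU (h : IIDBlock Z μ₂ μ₃ μ₄) (A : Finset ℕ) : ∫ ω, Usum Z A ω = 0 := by
  unfold Usum
  rw [integral_finset_sum A fun t _ => (h.l4 t).integrable (by norm_num)]
  simp [h.m1]

lemma EQ (h : IIDBlock Z μ₂ μ₃ μ₄) (A : Finset ℕ) : ∫ ω, Qsum Z A ω = (A.card : ℝ) * μ₂ := by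
  unfold Qsum
  rw [integral_finset_sum A fun t _ => h.int_Zpow t 2 (by norm_num)]
  simp [h.m2, Finset.sum_const, nsmul_eq_mul, mul_comm]

lemma EU2 (h : IIDBlock Z μ₂ μ₃ μ₄) (A : Finset ℕ) : ∫ ω, (Usum Z A ω) ^ 2 = (A.card : ℝ) * μ₂ := by
  classical
  induction A using Finset.cons_induction with
  | empty => simp [Usum]
  | cons a A ha ih =>
    have key : (fun ω => (Usum Z (Finset.cons a A ha) ω) ^ 2)
        = fun ω => (Usum Z A ω) ^ 2
            + ((2:ℝ) * (Usum Z A ω ^ 1 * Qsum Z A ω ^ 0 * Z a ω ^ 1) + Z a ω ^ 2) := by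
      funext ω; simp only [Usum, Qsum, Finset.sum_cons]; ring
    have I2 : Integrable (fun ω => (2:ℝ) * (Usum Z A ω ^ 1 * Qsum Z A ω ^ 0 * Z a ω ^ 1)) ℙ := by
      exact (h.int_UQ_Z ha 1 0 1 (by norm_num) (by norm_num)).const_mul (2:ℝ)
    have I3 : Integrable (fun ω => Z a ω ^ 2) ℙ := h.int_Zpow a 2 (by norm_num)
    have I1' : Integrable (fun ω => (Usum Z A ω) ^ 2) ℙ := by
      simpa using h.int_UQ A 2 0 (by norm_num)
    have I23 : Integrable (fun ω => (2:ℝ) * (Usum Z A ω ^ 1 * Qsum Z A ω ^ 0 * Z a ω ^ 1)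
        + Z a ω ^ 2) ℙ := I2.add I3
    rw [key, integral_add I1' I23, integral_add I2 I3, integral_const_mul _ _,
      h.integral_UQ_Z ha 1 0 1]
    simp only [pow_zero, pow_one, mul_one]
    rw [h.EU A, h.m2 a, ih, Finset.card_cons]
    push_cast; ring
lemma EU3 (h : IIDBlock Z μ₂ μ₃ μ₄) (A : Finset ℕ) :
    ∫ ω, (Usum Z A ω) ^ 3 = (A.card : ℝ) * μ₃ := by
  classical
  induction A using Finset.cons_induction with
  | empty => simp [Usum]
  | cons a A ha ih =>
    have key : (fun ω => (Usum Z (Finset.cons a A ha) ω) ^ 3)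
        = fun ω => (Usum Z A ω) ^ 3
            + ((3:ℝ) * (Usum Z A ω ^ 2 * Qsum Z A ω ^ 0 * Z a ω ^ 1)
              + ((3:ℝ) * (Usum Z A ω ^ 1 * Qsum Z A ω ^ 0 * Z a ω ^ 2) + Z a ω ^ 3)) := by
      funext ω; simp only [Usum, Qsum, Finset.sum_cons]; ring
    have I1 : Integrable (fun ω => (Usum Z A ω) ^ 3) ℙ := by
      simpa using h.int_UQ A 3 0 (by norm_num)
    have Ia : Integrable (fun ω => (3:ℝ) * (Usum Z A ω ^ 2 * Qsum Z A ω ^ 0 * Z a ω ^ 1)) ℙ := by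
      exact (h.int_UQ_Z ha 2 0 1 (by norm_num) (by norm_num)).const_mul (3:ℝ)
    have Ib : Integrable (fun ω => (3:ℝ) * (Usum Z A ω ^ 1 * Qsum Z A ω ^ 0 * Z a ω ^ 2)) ℙ := by
      exact (h.int_UQ_Z ha 1 0 2 (by norm_num) (by norm_num)).const_mul (3:ℝ)
    have Ic : Integrable (fun ω => Z a ω ^ 3) ℙ := h.int_Zpow a 3 (by norm_num)
    have Jbc : Integrable (fun ω => (3:ℝ) * (Usum Z A ω ^ 1 * Qsum Z A ω ^ 0 * Z a ω ^ 2) + Z a ω ^ 3) ℙ := Ib.add Ic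
    have Jabc : Integrable (fun ω => (3:ℝ) * (Usum Z A ω ^ 2 * Qsum Z A ω ^ 0 * Z a ω ^ 1) + ((3:ℝ) * (Usum Z A ω ^ 1 * Qsum Z A ω ^ 0 * Z a ω ^ 2) + Z a ω ^ 3)) ℙ := Ia.add Jbc
    rw [key, integral_add I1 Jabc, integral_add Ia Jbc,
      integral_add Ib Ic, integral_const_mul _ _, integral_const_mul _ _,
      h.integral_UQ_Z ha 2 0 1, h.integral_UQ_Z ha 1 0 2]
    simp only [pow_zero, pow_one, mul_one]
    rw [h.EU2 A, h.EU A, h.m1 a, h.m2 a, h.m3 a, ih, Finset.card_cons]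
    push_cast; ring

lemma EU4 (h : IIDBlock Z μ₂ μ₃ μ₄) (A : Finset ℕ) :
    ∫ ω, (Usum Z A ω) ^ 4
      = (A.card : ℝ) * μ₄ + 3 * (A.card : ℝ) * ((A.card : ℝ) - 1) * μ₂ ^ 2 := by
  classical
  induction A using Finset.cons_induction with
  | empty => simp [Usum]
  | cons a A ha ih =>
    have key : (fun ω => (Usum Z (Finset.cons a A ha) ω) ^ 4)
        = fun ω => (Usum Z A ω) ^ 4
            + ((4:ℝ) * (Usum Z A ω ^ 3 * Qsum Z A ω ^ 0 * Z a ω ^ 1)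
              + ((6:ℝ) * (Usum Z A ω ^ 2 * Qsum Z A ω ^ 0 * Z a ω ^ 2)
                + ((4:ℝ) * (Usum Z A ω ^ 1 * Qsum Z A ω ^ 0 * Z a ω ^ 3) + Z a ω ^ 4))) := by
      funext ω; simp only [Usum, Qsum, Finset.sum_cons]; ring
    have I1 : Integrable (fun ω => (Usum Z A ω) ^ 4) ℙ := by
      simpa using h.int_UQ A 4 0 (by norm_num)
    have Ia : Integrable (fun ω => (4:ℝ) * (Usum Z A ω ^ 3 * Qsum Z A ω ^ 0 * Z a ω ^ 1)) ℙ := by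
      exact (h.int_UQ_Z ha 3 0 1 (by norm_num) (by norm_num)).const_mul (4:ℝ)
    have Ib : Integrable (fun ω => (6:ℝ) * (Usum Z A ω ^ 2 * Qsum Z A ω ^ 0 * Z a ω ^ 2)) ℙ := by
      exact (h.int_UQ_Z ha 2 0 2 (by norm_num) (by norm_num)).const_mul (6:ℝ)
    have Ic : Integrable (fun ω => (4:ℝ) * (Usum Z A ω ^ 1 * Qsum Z A ω ^ 0 * Z a ω ^ 3)) ℙ := by
      exact (h.int_UQ_Z ha 1 0 3 (by norm_num) (by norm_num)).const_mul (4:ℝ)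
    have Id : Integrable (fun ω => Z a ω ^ 4) ℙ := h.int_Zpow a 4 (by norm_num)
    have Jcd : Integrable (fun ω => (4:ℝ) * (Usum Z A ω ^ 1 * Qsum Z A ω ^ 0 * Z a ω ^ 3) + Z a ω ^ 4) ℙ := Ic.add Id
    have Jbcd : Integrable (fun ω => (6:ℝ) * (Usum Z A ω ^ 2 * Qsum Z A ω ^ 0 * Z a ω ^ 2) + ((4:ℝ) * (Usum Z A ω ^ 1 * Qsum Z A ω ^ 0 * Z a ω ^ 3) + Z a ω ^ 4)) ℙ := Ib.add Jcd
    have Jabcd : Integrable (fun ω => (4:ℝ) * (Usum Z A ω ^ 3 * Qsum Z A ω ^ 0 * Z a ω ^ 1) + ((6:ℝ) * (Usum Z A ω ^ 2 * Qsum Z A ω ^ 0 * Z a ω ^ 2) + ((4:ℝ) * (Usum Z A ω ^ 1 * Qsum Z A ω ^ 0 * Z a ω ^ 3) + Z a ω ^ 4))) ℙ := Ia.add Jbcd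
    rw [key, integral_add I1 Jabcd,
      integral_add Ia Jbcd, integral_add Ib Jcd, integral_add Ic Id,
      integral_const_mul _ _, integral_const_mul _ _, integral_const_mul _ _,
      h.integral_UQ_Z ha 3 0 1, h.integral_UQ_Z ha 2 0 2, h.integral_UQ_Z ha 1 0 3]
    simp only [pow_zero, pow_one, mul_one]
    rw [h.EU3 A, h.EU2 A, h.EU A, h.m1 a, h.m2 a, h.m3 a, h.m4 a, ih, Finset.card_cons]
    push_cast; ring

lemma EQU (h : IIDBlock Z μ₂ μ₃ μ₄) (A : Finset ℕ) :
    ∫ ω, Usum Z A ω * Qsum Z A ω = (A.card : ℝ) * μ₃ := by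
  classical
  induction A using Finset.cons_induction with
  | empty => simp [Usum, Qsum]
  | cons a A ha ih =>
    have key : (fun ω => Usum Z (Finset.cons a A ha) ω * Qsum Z (Finset.cons a A ha) ω)
        = fun ω => Usum Z A ω * Qsum Z A ω
            + (Usum Z A ω ^ 1 * Qsum Z A ω ^ 0 * Z a ω ^ 2
              + (Usum Z A ω ^ 0 * Qsum Z A ω ^ 1 * Z a ω ^ 1 + Z a ω ^ 3)) := by
      funext ω; simp only [Usum, Qsum, Finset.sum_cons]; ring
    have I1 : Integrable (fun ω => Usum Z A ω * Qsum Z A ω) ℙ := by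
      simpa using h.int_UQ A 1 1 (by norm_num)
    have Ia : Integrable (fun ω => Usum Z A ω ^ 1 * Qsum Z A ω ^ 0 * Z a ω ^ 2) ℙ :=
      h.int_UQ_Z ha 1 0 2 (by norm_num) (by norm_num)
    have Ib : Integrable (fun ω => Usum Z A ω ^ 0 * Qsum Z A ω ^ 1 * Z a ω ^ 1) ℙ :=
      h.int_UQ_Z ha 0 1 1 (by norm_num) (by norm_num)
    have Ic : Integrable (fun ω => Z a ω ^ 3) ℙ := h.int_Zpow a 3 (by norm_num)
    have Jbc : Integrable (fun ω => Usum Z A ω ^ 0 * Qsum Z A ω ^ 1 * Z a ω ^ 1 + Z a ω ^ 3) ℙ := Ib.add Ic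
    have Jabc : Integrable (fun ω => Usum Z A ω ^ 1 * Qsum Z A ω ^ 0 * Z a ω ^ 2 + (Usum Z A ω ^ 0 * Qsum Z A ω ^ 1 * Z a ω ^ 1 + Z a ω ^ 3)) ℙ := Ia.add Jbc
    rw [key, integral_add I1 Jabc, integral_add Ia Jbc,
      integral_add Ib Ic, h.integral_UQ_Z ha 1 0 2, h.integral_UQ_Z ha 0 1 1]
    simp only [pow_zero, pow_one, mul_one, one_mul]
    rw [h.EU A, h.EQ A, h.m1 a, h.m3 a, ih, Finset.card_cons]
    push_cast; ring

lemma EQ2 (h : IIDBlock Z μ₂ μ₃ μ₄) (A : Finset ℕ) :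
    ∫ ω, (Qsum Z A ω) ^ 2
      = (A.card : ℝ) * μ₄ + (A.card : ℝ) * ((A.card : ℝ) - 1) * μ₂ ^ 2 := by
  classical
  induction A using Finset.cons_induction with
  | empty => simp [Qsum]
  | cons a A ha ih =>
    have key : (fun ω => (Qsum Z (Finset.cons a A ha) ω) ^ 2)
        = fun ω => (Qsum Z A ω) ^ 2
            + ((2:ℝ) * (Usum Z A ω ^ 0 * Qsum Z A ω ^ 1 * Z a ω ^ 2) + Z a ω ^ 4) := by
      funext ω; simp only [Usum, Qsum, Finset.sum_cons]; ring
    have I1 : Integrable (fun ω => (Qsum Z A ω) ^ 2) ℙ := by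
      simpa using h.int_UQ A 0 2 (by norm_num)
    have Ia : Integrable (fun ω => (2:ℝ) * (Usum Z A ω ^ 0 * Qsum Z A ω ^ 1 * Z a ω ^ 2)) ℙ := by
      exact (h.int_UQ_Z ha 0 1 2 (by norm_num) (by norm_num)).const_mul (2:ℝ)
    have Ib : Integrable (fun ω => Z a ω ^ 4) ℙ := h.int_Zpow a 4 (by norm_num)
    have Jab : Integrable (fun ω => (2:ℝ) * (Usum Z A ω ^ 0 * Qsum Z A ω ^ 1 * Z a ω ^ 2) + Z a ω ^ 4) ℙ := Ia.add Ib
    rw [key, integral_add I1 Jab, integral_add Ia Ib, integral_const_mul _ _,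
      h.integral_UQ_Z ha 0 1 2]
    simp only [pow_zero, pow_one, mul_one, one_mul]
    rw [h.EQ A, h.m2 a, h.m4 a, ih, Finset.card_cons]
    push_cast; ring

lemma EQU2 (h : IIDBlock Z μ₂ μ₃ μ₄) (A : Finset ℕ) :
    ∫ ω, Usum Z A ω ^ 2 * Qsum Z A ω
      = (A.card : ℝ) * μ₄ + (A.card : ℝ) * ((A.card : ℝ) - 1) * μ₂ ^ 2 := by
  classical
  induction A using Finset.cons_induction with
  | empty => simp [Usum, Qsum]
  | cons a A ha ih =>
    have key : (fun ω => Usum Z (Finset.cons a A ha) ω ^ 2 * Qsum Z (Finset.cons a A ha) ω)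
        = fun ω => Usum Z A ω ^ 2 * Qsum Z A ω
            + ((2:ℝ) * (Usum Z A ω ^ 1 * Qsum Z A ω ^ 1 * Z a ω ^ 1)
              + ((Usum Z A ω ^ 0 * Qsum Z A ω ^ 1 * Z a ω ^ 2)
                + ((Usum Z A ω ^ 2 * Qsum Z A ω ^ 0 * Z a ω ^ 2)
                  + ((2:ℝ) * (Usum Z A ω ^ 1 * Qsum Z A ω ^ 0 * Z a ω ^ 3) + Z a ω ^ 4)))) := by
      funext ω; simp only [Usum, Qsum, Finset.sum_cons]; ring
    have I1 : Integrable (fun ω => Usum Z A ω ^ 2 * Qsum Z A ω) ℙ := by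
      simpa using h.int_UQ A 2 1 (by norm_num)
    have Ia : Integrable (fun ω => (2:ℝ) * (Usum Z A ω ^ 1 * Qsum Z A ω ^ 1 * Z a ω ^ 1)) ℙ := by
      exact (h.int_UQ_Z ha 1 1 1 (by norm_num) (by norm_num)).const_mul (2:ℝ)
    have Ib : Integrable (fun ω => Usum Z A ω ^ 0 * Qsum Z A ω ^ 1 * Z a ω ^ 2) ℙ :=
      h.int_UQ_Z ha 0 1 2 (by norm_num) (by norm_num)
    have Ic : Integrable (fun ω => Usum Z A ω ^ 2 * Qsum Z A ω ^ 0 * Z a ω ^ 2) ℙ :=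
      h.int_UQ_Z ha 2 0 2 (by norm_num) (by norm_num)
    have Id : Integrable (fun ω => (2:ℝ) * (Usum Z A ω ^ 1 * Qsum Z A ω ^ 0 * Z a ω ^ 3)) ℙ := by
      exact (h.int_UQ_Z ha 1 0 3 (by norm_num) (by norm_num)).const_mul (2:ℝ)
    have Ie : Integrable (fun ω => Z a ω ^ 4) ℙ := h.int_Zpow a 4 (by norm_num)
    have Jde : Integrable (fun ω => (2:ℝ) * (Usum Z A ω ^ 1 * Qsum Z A ω ^ 0 * Z a ω ^ 3) + Z a ω ^ 4) ℙ := Id.add Ie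
    have Jcde : Integrable (fun ω => Usum Z A ω ^ 2 * Qsum Z A ω ^ 0 * Z a ω ^ 2 + ((2:ℝ) * (Usum Z A ω ^ 1 * Qsum Z A ω ^ 0 * Z a ω ^ 3) + Z a ω ^ 4)) ℙ := Ic.add Jde
    have Jbcde : Integrable (fun ω => Usum Z A ω ^ 0 * Qsum Z A ω ^ 1 * Z a ω ^ 2 + (Usum Z A ω ^ 2 * Qsum Z A ω ^ 0 * Z a ω ^ 2 + ((2:ℝ) * (Usum Z A ω ^ 1 * Qsum Z A ω ^ 0 * Z a ω ^ 3) + Z a ω ^ 4))) ℙ := Ib.add Jcde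
    have Jabcde : Integrable (fun ω => (2:ℝ) * (Usum Z A ω ^ 1 * Qsum Z A ω ^ 1 * Z a ω ^ 1) + (Usum Z A ω ^ 0 * Qsum Z A ω ^ 1 * Z a ω ^ 2 + (Usum Z A ω ^ 2 * Qsum Z A ω ^ 0 * Z a ω ^ 2 + ((2:ℝ) * (Usum Z A ω ^ 1 * Qsum Z A ω ^ 0 * Z a ω ^ 3) + Z a ω ^ 4)))) ℙ := Ia.add Jbcde
    rw [key, integral_add I1 Jabcde,
      integral_add Ia Jbcde, integral_add Ib Jcde,
      integral_add Ic Jde, integral_add Id Ie,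
      integral_const_mul _ _, integral_const_mul _ _,
      h.integral_UQ_Z ha 1 1 1, h.integral_UQ_Z ha 0 1 2, h.integral_UQ_Z ha 2 0 2,
      h.integral_UQ_Z ha 1 0 3]
    simp only [pow_zero, pow_one, mul_one, one_mul]
    rw [h.EQU A, h.EQ A, h.EU2 A, h.EU A, h.m1 a, h.m2 a, h.m3 a, h.m4 a, ih, Finset.card_cons]
    push_cast; ring

lemma mem2_sV (h : IIDBlock Z μ₂ μ₃ μ₄) (S : ℕ) : MemLp (sV Z S) 2 ℙ := by
  have e : sV Z S = fun ω => (1/((S:ℝ)-1)) * Qsum Z (Finset.range S) ω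
      - ((1/((S:ℝ)-1)) * (1/(S:ℝ))) * (Usum Z (Finset.range S) ω) ^ 2 := by
    funext ω; simp only [sV]; ring
  rw [e]
  exact MemLp.sub ((h.mem2_Q _).const_mul _) ((memLp_sq2 (h.mem4_U _)).const_mul _)

lemma int_sV (h : IIDBlock Z μ₂ μ₃ μ₄) (S : ℕ) : Integrable (sV Z S) ℙ :=
  (h.mem2_sV S).integrable one_le_two

lemma E_sV (h : IIDBlock Z μ₂ μ₃ μ₄) (S : ℕ) (hS : 2 ≤ S) : ∫ ω, sV Z S ω = μ₂ := by
  have hS0 : (S:ℝ) ≠ 0 := Nat.cast_ne_zero.mpr (by omega)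
  have hS2 : (2:ℝ) ≤ (S:ℝ) := by exact_mod_cast hS
  have hS1 : (S:ℝ) - 1 ≠ 0 := by intro hc; nlinarith
  have e : (fun ω => sV Z S ω) = fun ω => (1/((S:ℝ)-1)) * Qsum Z (Finset.range S) ω
      + (-((1/((S:ℝ)-1)) * (1/(S:ℝ)))) * (Usum Z (Finset.range S) ω) ^ 2 := by
    funext ω; simp only [sV]; ring
  have IQ : Integrable (fun ω => (1/((S:ℝ)-1)) * Qsum Z (Finset.range S) ω) ℙ := by
    exact ((h.mem2_Q _).integrable one_le_two).const_mul _
  have IU : Integrable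
      (fun ω => (-((1/((S:ℝ)-1)) * (1/(S:ℝ)))) * (Usum Z (Finset.range S) ω) ^ 2) ℙ := by
    exact ((memLp_sq2 (h.mem4_U _)).integrable one_le_two).const_mul _
  rw [e, integral_add IQ IU, integral_const_mul _ _, integral_const_mul _ _, h.EQ, h.EU2,
    Finset.card_range]
  field_simp
  ring

lemma Esq_sV (h : IIDBlock Z μ₂ μ₃ μ₄) (S : ℕ) (hS : 2 ≤ S) :
    ∫ ω, (sV Z S ω) ^ 2
      = μ₂ ^ 2 + μ₄ / (S:ℝ) - ((S:ℝ) - 3) / ((S:ℝ) * ((S:ℝ) - 1)) * μ₂ ^ 2 := by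
  have hS0 : (S:ℝ) ≠ 0 := Nat.cast_ne_zero.mpr (by omega)
  have hS2 : (2:ℝ) ≤ (S:ℝ) := by exact_mod_cast hS
  have hS1 : (S:ℝ) - 1 ≠ 0 := by intro hc; nlinarith
  have key : (fun ω => (sV Z S ω) ^ 2) = fun ω =>
      ((1/((S:ℝ)-1)) ^ 2)
          * (Usum Z (Finset.range S) ω ^ 0 * Qsum Z (Finset.range S) ω ^ 2)
      + ((-2) * (1/(S:ℝ)) * (1/((S:ℝ)-1)) ^ 2)
          * (Usum Z (Finset.range S) ω ^ 2 * Qsum Z (Finset.range S) ω ^ 1)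
      + ((1/(S:ℝ)) ^ 2 * (1/((S:ℝ)-1)) ^ 2)
          * (Usum Z (Finset.range S) ω ^ 4 * Qsum Z (Finset.range S) ω ^ 0) := by
    funext ω; simp only [sV]; ring
  have I1 : Integrable (fun ω => ((1/((S:ℝ)-1)) ^ 2)
      * (Usum Z (Finset.range S) ω ^ 0 * Qsum Z (Finset.range S) ω ^ 2)) ℙ := by
    exact (h.int_UQ (Finset.range S) 0 2 (by norm_num)).const_mul _
  have I2 : Integrable (fun ω => ((-2) * (1/(S:ℝ)) * (1/((S:ℝ)-1)) ^ 2)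
      * (Usum Z (Finset.range S) ω ^ 2 * Qsum Z (Finset.range S) ω ^ 1)) ℙ := by
    exact (h.int_UQ (Finset.range S) 2 1 (by norm_num)).const_mul _
  have I3 : Integrable (fun ω => ((1/(S:ℝ)) ^ 2 * (1/((S:ℝ)-1)) ^ 2)
      * (Usum Z (Finset.range S) ω ^ 4 * Qsum Z (Finset.range S) ω ^ 0)) ℙ := by
    exact (h.int_UQ (Finset.range S) 4 0 (by norm_num)).const_mul _
  have J12 : Integrable (fun ω => ((1/((S:ℝ)-1)) ^ 2)
      * (Usum Z (Finset.range S) ω ^ 0 * Qsum Z (Finset.range S) ω ^ 2)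
      + ((-2) * (1/(S:ℝ)) * (1/((S:ℝ)-1)) ^ 2)
          * (Usum Z (Finset.range S) ω ^ 2 * Qsum Z (Finset.range S) ω ^ 1)) ℙ := I1.add I2
  rw [key, integral_add J12 I3, integral_add I1 I2, integral_const_mul _ _,
    integral_const_mul _ _, integral_const_mul _ _]
  simp only [pow_zero, pow_one, mul_one, one_mul]
  rw [h.EQ2, h.EQU2, h.EU4, Finset.card_range]
  field_simp
  ring

lemma var_sV (h : IIDBlock Z μ₂ μ₃ μ₄) (S : ℕ) (hS : 2 ≤ S) :
    variance (sV Z S) ℙ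
      = μ₄ / (S:ℝ) - ((S:ℝ) - 3) / ((S:ℝ) * ((S:ℝ) - 1)) * μ₂ ^ 2 := by
  rw [variance_eq_sub (h.mem2_sV S)]
  have e0 : (sV Z S) ^ 2 = fun ω => (sV Z S ω) ^ 2 := rfl
  rw [e0]
  rw [show (∫ ω, (fun ω => (sV Z S ω) ^ 2) ω) = ∫ ω, (sV Z S ω) ^ 2 from rfl]
  rw [h.Esq_sV S hS, show (∫ ω, sV Z S ω) = μ₂ from h.E_sV S hS]
  ring


lemma Eprod_sV (h : IIDBlock Z μ₂ μ₃ μ₄) (S T : ℕ) (hS : 2 ≤ S) (hST : S ≤ T) :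
    ∫ ω, sV Z S ω * sV Z T ω
      = μ₂ ^ 2 + μ₄ / (T:ℝ) - ((T:ℝ) - 3) / ((T:ℝ) * ((T:ℝ) - 1)) * μ₂ ^ 2 := by
  have hT : 2 ≤ T := hS.trans hST
  have hS0 : (S:ℝ) ≠ 0 := Nat.cast_ne_zero.mpr (by omega)
  have hT0 : (T:ℝ) ≠ 0 := Nat.cast_ne_zero.mpr (by omega)
  have hS2 : (2:ℝ) ≤ (S:ℝ) := by exact_mod_cast hS
  have hT2 : (2:ℝ) ≤ (T:ℝ) := by exact_mod_cast hT
  have hS1 : (S:ℝ) - 1 ≠ 0 := by intro hc; nlinarith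
  have hT1 : (T:ℝ) - 1 ≠ 0 := by intro hc; nlinarith
  have hd : Disjoint (Finset.range S) (Finset.Ico S T) := by
    rw [Finset.range_eq_Ico]; exact Finset.Ico_disjoint_Ico_consecutive 0 S T
  have hU : ∀ ω, Usum Z (Finset.range T) ω
      = Usum Z (Finset.range S) ω + Usum Z (Finset.Ico S T) ω := by
    intro ω; simp only [Usum]
    rw [← Finset.sum_range_add_sum_Ico _ hST]
  have hQ : ∀ ω, Qsum Z (Finset.range T) ω
      = Qsum Z (Finset.range S) ω + Qsum Z (Finset.Ico S T) ω := by
    intro ω; simp only [Qsum]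
    rw [← Finset.sum_range_add_sum_Ico _ hST]
  have key : (fun ω => sV Z S ω * sV Z T ω)
      = fun ω => ((1/((S:ℝ)-1)) * (1/((T:ℝ)-1))) * ((Usum Z (Finset.range S) ω ^ 0 * Qsum Z (Finset.range S) ω ^ 2) * (Usum Z (Finset.Ico S T) ω ^ 0 * Qsum Z (Finset.Ico S T) ω ^ 0))
            + (((1/((S:ℝ)-1)) * (1/((T:ℝ)-1))) * ((Usum Z (Finset.range S) ω ^ 0 * Qsum Z (Finset.range S) ω ^ 1) * (Usum Z (Finset.Ico S T) ω ^ 0 * Qsum Z (Finset.Ico S T) ω ^ 1))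
            + ((-((1/((S:ℝ)-1)) * (1/((T:ℝ)-1)) * (1/(T:ℝ)))) * ((Usum Z (Finset.range S) ω ^ 2 * Qsum Z (Finset.range S) ω ^ 1) * (Usum Z (Finset.Ico S T) ω ^ 0 * Qsum Z (Finset.Ico S T) ω ^ 0))
            + ((-((2:ℝ) * (1/((S:ℝ)-1)) * (1/((T:ℝ)-1)) * (1/(T:ℝ)))) * ((Usum Z (Finset.range S) ω ^ 1 * Qsum Z (Finset.range S) ω ^ 1) * (Usum Z (Finset.Ico S T) ω ^ 1 * Qsum Z (Finset.Ico S T) ω ^ 0))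
            + ((-((1/((S:ℝ)-1)) * (1/((T:ℝ)-1)) * (1/(T:ℝ)))) * ((Usum Z (Finset.range S) ω ^ 0 * Qsum Z (Finset.range S) ω ^ 1) * (Usum Z (Finset.Ico S T) ω ^ 2 * Qsum Z (Finset.Ico S T) ω ^ 0))
            + ((-((1/((S:ℝ)-1)) * (1/((T:ℝ)-1)) * (1/(S:ℝ)))) * ((Usum Z (Finset.range S) ω ^ 2 * Qsum Z (Finset.range S) ω ^ 1) * (Usum Z (Finset.Ico S T) ω ^ 0 * Qsum Z (Finset.Ico S T) ω ^ 0))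
            + ((-((1/((S:ℝ)-1)) * (1/((T:ℝ)-1)) * (1/(S:ℝ)))) * ((Usum Z (Finset.range S) ω ^ 2 * Qsum Z (Finset.range S) ω ^ 0) * (Usum Z (Finset.Ico S T) ω ^ 0 * Qsum Z (Finset.Ico S T) ω ^ 1))
            + (((1/((S:ℝ)-1)) * (1/((T:ℝ)-1)) * (1/(S:ℝ)) * (1/(T:ℝ))) * ((Usum Z (Finset.range S) ω ^ 4 * Qsum Z (Finset.range S) ω ^ 0) * (Usum Z (Finset.Ico S T) ω ^ 0 * Qsum Z (Finset.Ico S T) ω ^ 0))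
            + (((2:ℝ) * (1/((S:ℝ)-1)) * (1/((T:ℝ)-1)) * (1/(S:ℝ)) * (1/(T:ℝ))) * ((Usum Z (Finset.range S) ω ^ 3 * Qsum Z (Finset.range S) ω ^ 0) * (Usum Z (Finset.Ico S T) ω ^ 1 * Qsum Z (Finset.Ico S T) ω ^ 0))
            + (((1/((S:ℝ)-1)) * (1/((T:ℝ)-1)) * (1/(S:ℝ)) * (1/(T:ℝ))) * ((Usum Z (Finset.range S) ω ^ 2 * Qsum Z (Finset.range S) ω ^ 0) * (Usum Z (Finset.Ico S T) ω ^ 2 * Qsum Z (Finset.Ico S T) ω ^ 0))))))))))) := by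
    funext ω; simp only [sV]; rw [hU ω, hQ ω]; ring
  have I0 : Integrable (fun ω => ((1/((S:ℝ)-1)) * (1/((T:ℝ)-1))) * ((Usum Z (Finset.range S) ω ^ 0 * Qsum Z (Finset.range S) ω ^ 2) * (Usum Z (Finset.Ico S T) ω ^ 0 * Qsum Z (Finset.Ico S T) ω ^ 0))) ℙ := by
    exact ((h.blkUQ hd 0 2 0 0).integrable_mul
      (h.int_UQ (Finset.range S) 0 2 (by norm_num))
      (h.int_UQ (Finset.Ico S T) 0 0 (by norm_num))).const_mul _
  have I1 : Integrable (fun ω => ((1/((S:ℝ)-1)) * (1/((T:ℝ)-1))) * ((Usum Z (Finset.range S) ω ^ 0 * Qsum Z (Finset.range S) ω ^ 1) * (Usum Z (Finset.Ico S T) ω ^ 0 * Qsum Z (Finset.Ico S T) ω ^ 1))) ℙ := by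
    exact ((h.blkUQ hd 0 1 0 1).integrable_mul
      (h.int_UQ (Finset.range S) 0 1 (by norm_num))
      (h.int_UQ (Finset.Ico S T) 0 1 (by norm_num))).const_mul _
  have I2 : Integrable (fun ω => (-((1/((S:ℝ)-1)) * (1/((T:ℝ)-1)) * (1/(T:ℝ)))) * ((Usum Z (Finset.range S) ω ^ 2 * Qsum Z (Finset.range S) ω ^ 1) * (Usum Z (Finset.Ico S T) ω ^ 0 * Qsum Z (Finset.Ico S T) ω ^ 0))) ℙ := by
    exact ((h.blkUQ hd 2 1 0 0).integrable_mul
      (h.int_UQ (Finset.range S) 2 1 (by norm_num))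
      (h.int_UQ (Finset.Ico S T) 0 0 (by norm_num))).const_mul _
  have I3 : Integrable (fun ω => (-((2:ℝ) * (1/((S:ℝ)-1)) * (1/((T:ℝ)-1)) * (1/(T:ℝ)))) * ((Usum Z (Finset.range S) ω ^ 1 * Qsum Z (Finset.range S) ω ^ 1) * (Usum Z (Finset.Ico S T) ω ^ 1 * Qsum Z (Finset.Ico S T) ω ^ 0))) ℙ := by
    exact ((h.blkUQ hd 1 1 1 0).integrable_mul
      (h.int_UQ (Finset.range S) 1 1 (by norm_num))
      (h.int_UQ (Finset.Ico S T) 1 0 (by norm_num))).const_mul _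
  have I4 : Integrable (fun ω => (-((1/((S:ℝ)-1)) * (1/((T:ℝ)-1)) * (1/(T:ℝ)))) * ((Usum Z (Finset.range S) ω ^ 0 * Qsum Z (Finset.range S) ω ^ 1) * (Usum Z (Finset.Ico S T) ω ^ 2 * Qsum Z (Finset.Ico S T) ω ^ 0))) ℙ := by
    exact ((h.blkUQ hd 0 1 2 0).integrable_mul
      (h.int_UQ (Finset.range S) 0 1 (by norm_num))
      (h.int_UQ (Finset.Ico S T) 2 0 (by norm_num))).const_mul _
  have I5 : Integrable (fun ω => (-((1/((S:ℝ)-1)) * (1/((T:ℝ)-1)) * (1/(S:ℝ)))) * ((Usum Z (Finset.range S) ω ^ 2 * Qsum Z (Finset.range S) ω ^ 1) * (Usum Z (Finset.Ico S T) ω ^ 0 * Qsum Z (Finset.Ico S T) ω ^ 0))) ℙ := by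
    exact ((h.blkUQ hd 2 1 0 0).integrable_mul
      (h.int_UQ (Finset.range S) 2 1 (by norm_num))
      (h.int_UQ (Finset.Ico S T) 0 0 (by norm_num))).const_mul _
  have I6 : Integrable (fun ω => (-((1/((S:ℝ)-1)) * (1/((T:ℝ)-1)) * (1/(S:ℝ)))) * ((Usum Z (Finset.range S) ω ^ 2 * Qsum Z (Finset.range S) ω ^ 0) * (Usum Z (Finset.Ico S T) ω ^ 0 * Qsum Z (Finset.Ico S T) ω ^ 1))) ℙ := by
    exact ((h.blkUQ hd 2 0 0 1).integrable_mul
      (h.int_UQ (Finset.range S) 2 0 (by norm_num))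
      (h.int_UQ (Finset.Ico S T) 0 1 (by norm_num))).const_mul _
  have I7 : Integrable (fun ω => ((1/((S:ℝ)-1)) * (1/((T:ℝ)-1)) * (1/(S:ℝ)) * (1/(T:ℝ))) * ((Usum Z (Finset.range S) ω ^ 4 * Qsum Z (Finset.range S) ω ^ 0) * (Usum Z (Finset.Ico S T) ω ^ 0 * Qsum Z (Finset.Ico S T) ω ^ 0))) ℙ := by
    exact ((h.blkUQ hd 4 0 0 0).integrable_mul
      (h.int_UQ (Finset.range S) 4 0 (by norm_num))
      (h.int_UQ (Finset.Ico S T) 0 0 (by norm_num))).const_mul _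
  have I8 : Integrable (fun ω => ((2:ℝ) * (1/((S:ℝ)-1)) * (1/((T:ℝ)-1)) * (1/(S:ℝ)) * (1/(T:ℝ))) * ((Usum Z (Finset.range S) ω ^ 3 * Qsum Z (Finset.range S) ω ^ 0) * (Usum Z (Finset.Ico S T) ω ^ 1 * Qsum Z (Finset.Ico S T) ω ^ 0))) ℙ := by
    exact ((h.blkUQ hd 3 0 1 0).integrable_mul
      (h.int_UQ (Finset.range S) 3 0 (by norm_num))
      (h.int_UQ (Finset.Ico S T) 1 0 (by norm_num))).const_mul _
  have I9 : Integrable (fun ω => ((1/((S:ℝ)-1)) * (1/((T:ℝ)-1)) * (1/(S:ℝ)) * (1/(T:ℝ))) * ((Usum Z (Finset.range S) ω ^ 2 * Qsum Z (Finset.range S) ω ^ 0) * (Usum Z (Finset.Ico S T) ω ^ 2 * Qsum Z (Finset.Ico S T) ω ^ 0))) ℙ := by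
    exact ((h.blkUQ hd 2 0 2 0).integrable_mul
      (h.int_UQ (Finset.range S) 2 0 (by norm_num))
      (h.int_UQ (Finset.Ico S T) 2 0 (by norm_num))).const_mul _
  have K8 : Integrable (fun ω => ((2:ℝ) * (1/((S:ℝ)-1)) * (1/((T:ℝ)-1)) * (1/(S:ℝ)) * (1/(T:ℝ))) * ((Usum Z (Finset.range S) ω ^ 3 * Qsum Z (Finset.range S) ω ^ 0) * (Usum Z (Finset.Ico S T) ω ^ 1 * Qsum Z (Finset.Ico S T) ω ^ 0))
            + ((1/((S:ℝ)-1)) * (1/((T:ℝ)-1)) * (1/(S:ℝ)) * (1/(T:ℝ))) * ((Usum Z (Finset.range S) ω ^ 2 * Qsum Z (Finset.range S) ω ^ 0) * (Usum Z (Finset.Ico S T) ω ^ 2 * Qsum Z (Finset.Ico S T) ω ^ 0))) ℙ := I8.add I9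
  have K7 : Integrable (fun ω => ((1/((S:ℝ)-1)) * (1/((T:ℝ)-1)) * (1/(S:ℝ)) * (1/(T:ℝ))) * ((Usum Z (Finset.range S) ω ^ 4 * Qsum Z (Finset.range S) ω ^ 0) * (Usum Z (Finset.Ico S T) ω ^ 0 * Qsum Z (Finset.Ico S T) ω ^ 0))
            + (((2:ℝ) * (1/((S:ℝ)-1)) * (1/((T:ℝ)-1)) * (1/(S:ℝ)) * (1/(T:ℝ))) * ((Usum Z (Finset.range S) ω ^ 3 * Qsum Z (Finset.range S) ω ^ 0) * (Usum Z (Finset.Ico S T) ω ^ 1 * Qsum Z (Finset.Ico S T) ω ^ 0))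
            + ((1/((S:ℝ)-1)) * (1/((T:ℝ)-1)) * (1/(S:ℝ)) * (1/(T:ℝ))) * ((Usum Z (Finset.range S) ω ^ 2 * Qsum Z (Finset.range S) ω ^ 0) * (Usum Z (Finset.Ico S T) ω ^ 2 * Qsum Z (Finset.Ico S T) ω ^ 0)))) ℙ := I7.add K8
  have K6 : Integrable (fun ω => (-((1/((S:ℝ)-1)) * (1/((T:ℝ)-1)) * (1/(S:ℝ)))) * ((Usum Z (Finset.range S) ω ^ 2 * Qsum Z (Finset.range S) ω ^ 0) * (Usum Z (Finset.Ico S T) ω ^ 0 * Qsum Z (Finset.Ico S T) ω ^ 1))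
            + (((1/((S:ℝ)-1)) * (1/((T:ℝ)-1)) * (1/(S:ℝ)) * (1/(T:ℝ))) * ((Usum Z (Finset.range S) ω ^ 4 * Qsum Z (Finset.range S) ω ^ 0) * (Usum Z (Finset.Ico S T) ω ^ 0 * Qsum Z (Finset.Ico S T) ω ^ 0))
            + (((2:ℝ) * (1/((S:ℝ)-1)) * (1/((T:ℝ)-1)) * (1/(S:ℝ)) * (1/(T:ℝ))) * ((Usum Z (Finset.range S) ω ^ 3 * Qsum Z (Finset.range S) ω ^ 0) * (Usum Z (Finset.Ico S T) ω ^ 1 * Qsum Z (Finset.Ico S T) ω ^ 0))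
            + ((1/((S:ℝ)-1)) * (1/((T:ℝ)-1)) * (1/(S:ℝ)) * (1/(T:ℝ))) * ((Usum Z (Finset.range S) ω ^ 2 * Qsum Z (Finset.range S) ω ^ 0) * (Usum Z (Finset.Ico S T) ω ^ 2 * Qsum Z (Finset.Ico S T) ω ^ 0))))) ℙ := I6.add K7
  have K5 : Integrable (fun ω => (-((1/((S:ℝ)-1)) * (1/((T:ℝ)-1)) * (1/(S:ℝ)))) * ((Usum Z (Finset.range S) ω ^ 2 * Qsum Z (Finset.range S) ω ^ 1) * (Usum Z (Finset.Ico S T) ω ^ 0 * Qsum Z (Finset.Ico S T) ω ^ 0))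
            + ((-((1/((S:ℝ)-1)) * (1/((T:ℝ)-1)) * (1/(S:ℝ)))) * ((Usum Z (Finset.range S) ω ^ 2 * Qsum Z (Finset.range S) ω ^ 0) * (Usum Z (Finset.Ico S T) ω ^ 0 * Qsum Z (Finset.Ico S T) ω ^ 1))
            + (((1/((S:ℝ)-1)) * (1/((T:ℝ)-1)) * (1/(S:ℝ)) * (1/(T:ℝ))) * ((Usum Z (Finset.range S) ω ^ 4 * Qsum Z (Finset.range S) ω ^ 0) * (Usum Z (Finset.Ico S T) ω ^ 0 * Qsum Z (Finset.Ico S T) ω ^ 0))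
            + (((2:ℝ) * (1/((S:ℝ)-1)) * (1/((T:ℝ)-1)) * (1/(S:ℝ)) * (1/(T:ℝ))) * ((Usum Z (Finset.range S) ω ^ 3 * Qsum Z (Finset.range S) ω ^ 0) * (Usum Z (Finset.Ico S T) ω ^ 1 * Qsum Z (Finset.Ico S T) ω ^ 0))
            + ((1/((S:ℝ)-1)) * (1/((T:ℝ)-1)) * (1/(S:ℝ)) * (1/(T:ℝ))) * ((Usum Z (Finset.range S) ω ^ 2 * Qsum Z (Finset.range S) ω ^ 0) * (Usum Z (Finset.Ico S T) ω ^ 2 * Qsum Z (Finset.Ico S T) ω ^ 0)))))) ℙ := I5.add K6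
  have K4 : Integrable (fun ω => (-((1/((S:ℝ)-1)) * (1/((T:ℝ)-1)) * (1/(T:ℝ)))) * ((Usum Z (Finset.range S) ω ^ 0 * Qsum Z (Finset.range S) ω ^ 1) * (Usum Z (Finset.Ico S T) ω ^ 2 * Qsum Z (Finset.Ico S T) ω ^ 0))
            + ((-((1/((S:ℝ)-1)) * (1/((T:ℝ)-1)) * (1/(S:ℝ)))) * ((Usum Z (Finset.range S) ω ^ 2 * Qsum Z (Finset.range S) ω ^ 1) * (Usum Z (Finset.Ico S T) ω ^ 0 * Qsum Z (Finset.Ico S T) ω ^ 0))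
            + ((-((1/((S:ℝ)-1)) * (1/((T:ℝ)-1)) * (1/(S:ℝ)))) * ((Usum Z (Finset.range S) ω ^ 2 * Qsum Z (Finset.range S) ω ^ 0) * (Usum Z (Finset.Ico S T) ω ^ 0 * Qsum Z (Finset.Ico S T) ω ^ 1))
            + (((1/((S:ℝ)-1)) * (1/((T:ℝ)-1)) * (1/(S:ℝ)) * (1/(T:ℝ))) * ((Usum Z (Finset.range S) ω ^ 4 * Qsum Z (Finset.range S) ω ^ 0) * (Usum Z (Finset.Ico S T) ω ^ 0 * Qsum Z (Finset.Ico S T) ω ^ 0))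
            + (((2:ℝ) * (1/((S:ℝ)-1)) * (1/((T:ℝ)-1)) * (1/(S:ℝ)) * (1/(T:ℝ))) * ((Usum Z (Finset.range S) ω ^ 3 * Qsum Z (Finset.range S) ω ^ 0) * (Usum Z (Finset.Ico S T) ω ^ 1 * Qsum Z (Finset.Ico S T) ω ^ 0))
            + ((1/((S:ℝ)-1)) * (1/((T:ℝ)-1)) * (1/(S:ℝ)) * (1/(T:ℝ))) * ((Usum Z (Finset.range S) ω ^ 2 * Qsum Z (Finset.range S) ω ^ 0) * (Usum Z (Finset.Ico S T) ω ^ 2 * Qsum Z (Finset.Ico S T) ω ^ 0))))))) ℙ := I4.add K5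
  have K3 : Integrable (fun ω => (-((2:ℝ) * (1/((S:ℝ)-1)) * (1/((T:ℝ)-1)) * (1/(T:ℝ)))) * ((Usum Z (Finset.range S) ω ^ 1 * Qsum Z (Finset.range S) ω ^ 1) * (Usum Z (Finset.Ico S T) ω ^ 1 * Qsum Z (Finset.Ico S T) ω ^ 0))
            + ((-((1/((S:ℝ)-1)) * (1/((T:ℝ)-1)) * (1/(T:ℝ)))) * ((Usum Z (Finset.range S) ω ^ 0 * Qsum Z (Finset.range S) ω ^ 1) * (Usum Z (Finset.Ico S T) ω ^ 2 * Qsum Z (Finset.Ico S T) ω ^ 0))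
            + ((-((1/((S:ℝ)-1)) * (1/((T:ℝ)-1)) * (1/(S:ℝ)))) * ((Usum Z (Finset.range S) ω ^ 2 * Qsum Z (Finset.range S) ω ^ 1) * (Usum Z (Finset.Ico S T) ω ^ 0 * Qsum Z (Finset.Ico S T) ω ^ 0))
            + ((-((1/((S:ℝ)-1)) * (1/((T:ℝ)-1)) * (1/(S:ℝ)))) * ((Usum Z (Finset.range S) ω ^ 2 * Qsum Z (Finset.range S) ω ^ 0) * (Usum Z (Finset.Ico S T) ω ^ 0 * Qsum Z (Finset.Ico S T) ω ^ 1))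
            + (((1/((S:ℝ)-1)) * (1/((T:ℝ)-1)) * (1/(S:ℝ)) * (1/(T:ℝ))) * ((Usum Z (Finset.range S) ω ^ 4 * Qsum Z (Finset.range S) ω ^ 0) * (Usum Z (Finset.Ico S T) ω ^ 0 * Qsum Z (Finset.Ico S T) ω ^ 0))
            + (((2:ℝ) * (1/((S:ℝ)-1)) * (1/((T:ℝ)-1)) * (1/(S:ℝ)) * (1/(T:ℝ))) * ((Usum Z (Finset.range S) ω ^ 3 * Qsum Z (Finset.range S) ω ^ 0) * (Usum Z (Finset.Ico S T) ω ^ 1 * Qsum Z (Finset.Ico S T) ω ^ 0))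
            + ((1/((S:ℝ)-1)) * (1/((T:ℝ)-1)) * (1/(S:ℝ)) * (1/(T:ℝ))) * ((Usum Z (Finset.range S) ω ^ 2 * Qsum Z (Finset.range S) ω ^ 0) * (Usum Z (Finset.Ico S T) ω ^ 2 * Qsum Z (Finset.Ico S T) ω ^ 0)))))))) ℙ := I3.add K4
  have K2 : Integrable (fun ω => (-((1/((S:ℝ)-1)) * (1/((T:ℝ)-1)) * (1/(T:ℝ)))) * ((Usum Z (Finset.range S) ω ^ 2 * Qsum Z (Finset.range S) ω ^ 1) * (Usum Z (Finset.Ico S T) ω ^ 0 * Qsum Z (Finset.Ico S T) ω ^ 0))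
            + ((-((2:ℝ) * (1/((S:ℝ)-1)) * (1/((T:ℝ)-1)) * (1/(T:ℝ)))) * ((Usum Z (Finset.range S) ω ^ 1 * Qsum Z (Finset.range S) ω ^ 1) * (Usum Z (Finset.Ico S T) ω ^ 1 * Qsum Z (Finset.Ico S T) ω ^ 0))
            + ((-((1/((S:ℝ)-1)) * (1/((T:ℝ)-1)) * (1/(T:ℝ)))) * ((Usum Z (Finset.range S) ω ^ 0 * Qsum Z (Finset.range S) ω ^ 1) * (Usum Z (Finset.Ico S T) ω ^ 2 * Qsum Z (Finset.Ico S T) ω ^ 0))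
            + ((-((1/((S:ℝ)-1)) * (1/((T:ℝ)-1)) * (1/(S:ℝ)))) * ((Usum Z (Finset.range S) ω ^ 2 * Qsum Z (Finset.range S) ω ^ 1) * (Usum Z (Finset.Ico S T) ω ^ 0 * Qsum Z (Finset.Ico S T) ω ^ 0))
            + ((-((1/((S:ℝ)-1)) * (1/((T:ℝ)-1)) * (1/(S:ℝ)))) * ((Usum Z (Finset.range S) ω ^ 2 * Qsum Z (Finset.range S) ω ^ 0) * (Usum Z (Finset.Ico S T) ω ^ 0 * Qsum Z (Finset.Ico S T) ω ^ 1))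
            + (((1/((S:ℝ)-1)) * (1/((T:ℝ)-1)) * (1/(S:ℝ)) * (1/(T:ℝ))) * ((Usum Z (Finset.range S) ω ^ 4 * Qsum Z (Finset.range S) ω ^ 0) * (Usum Z (Finset.Ico S T) ω ^ 0 * Qsum Z (Finset.Ico S T) ω ^ 0))
            + (((2:ℝ) * (1/((S:ℝ)-1)) * (1/((T:ℝ)-1)) * (1/(S:ℝ)) * (1/(T:ℝ))) * ((Usum Z (Finset.range S) ω ^ 3 * Qsum Z (Finset.range S) ω ^ 0) * (Usum Z (Finset.Ico S T) ω ^ 1 * Qsum Z (Finset.Ico S T) ω ^ 0))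
            + ((1/((S:ℝ)-1)) * (1/((T:ℝ)-1)) * (1/(S:ℝ)) * (1/(T:ℝ))) * ((Usum Z (Finset.range S) ω ^ 2 * Qsum Z (Finset.range S) ω ^ 0) * (Usum Z (Finset.Ico S T) ω ^ 2 * Qsum Z (Finset.Ico S T) ω ^ 0))))))))) ℙ := I2.add K3
  have K1 : Integrable (fun ω => ((1/((S:ℝ)-1)) * (1/((T:ℝ)-1))) * ((Usum Z (Finset.range S) ω ^ 0 * Qsum Z (Finset.range S) ω ^ 1) * (Usum Z (Finset.Ico S T) ω ^ 0 * Qsum Z (Finset.Ico S T) ω ^ 1))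
            + ((-((1/((S:ℝ)-1)) * (1/((T:ℝ)-1)) * (1/(T:ℝ)))) * ((Usum Z (Finset.range S) ω ^ 2 * Qsum Z (Finset.range S) ω ^ 1) * (Usum Z (Finset.Ico S T) ω ^ 0 * Qsum Z (Finset.Ico S T) ω ^ 0))
            + ((-((2:ℝ) * (1/((S:ℝ)-1)) * (1/((T:ℝ)-1)) * (1/(T:ℝ)))) * ((Usum Z (Finset.range S) ω ^ 1 * Qsum Z (Finset.range S) ω ^ 1) * (Usum Z (Finset.Ico S T) ω ^ 1 * Qsum Z (Finset.Ico S T) ω ^ 0))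
            + ((-((1/((S:ℝ)-1)) * (1/((T:ℝ)-1)) * (1/(T:ℝ)))) * ((Usum Z (Finset.range S) ω ^ 0 * Qsum Z (Finset.range S) ω ^ 1) * (Usum Z (Finset.Ico S T) ω ^ 2 * Qsum Z (Finset.Ico S T) ω ^ 0))
            + ((-((1/((S:ℝ)-1)) * (1/((T:ℝ)-1)) * (1/(S:ℝ)))) * ((Usum Z (Finset.range S) ω ^ 2 * Qsum Z (Finset.range S) ω ^ 1) * (Usum Z (Finset.Ico S T) ω ^ 0 * Qsum Z (Finset.Ico S T) ω ^ 0))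
            + ((-((1/((S:ℝ)-1)) * (1/((T:ℝ)-1)) * (1/(S:ℝ)))) * ((Usum Z (Finset.range S) ω ^ 2 * Qsum Z (Finset.range S) ω ^ 0) * (Usum Z (Finset.Ico S T) ω ^ 0 * Qsum Z (Finset.Ico S T) ω ^ 1))
            + (((1/((S:ℝ)-1)) * (1/((T:ℝ)-1)) * (1/(S:ℝ)) * (1/(T:ℝ))) * ((Usum Z (Finset.range S) ω ^ 4 * Qsum Z (Finset.range S) ω ^ 0) * (Usum Z (Finset.Ico S T) ω ^ 0 * Qsum Z (Finset.Ico S T) ω ^ 0))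
            + (((2:ℝ) * (1/((S:ℝ)-1)) * (1/((T:ℝ)-1)) * (1/(S:ℝ)) * (1/(T:ℝ))) * ((Usum Z (Finset.range S) ω ^ 3 * Qsum Z (Finset.range S) ω ^ 0) * (Usum Z (Finset.Ico S T) ω ^ 1 * Qsum Z (Finset.Ico S T) ω ^ 0))
            + ((1/((S:ℝ)-1)) * (1/((T:ℝ)-1)) * (1/(S:ℝ)) * (1/(T:ℝ))) * ((Usum Z (Finset.range S) ω ^ 2 * Qsum Z (Finset.range S) ω ^ 0) * (Usum Z (Finset.Ico S T) ω ^ 2 * Qsum Z (Finset.Ico S T) ω ^ 0)))))))))) ℙ := I1.add K2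
  rw [key, integral_add I0 K1, integral_add I1 K2, integral_add I2 K3, integral_add I3 K4, integral_add I4 K5, integral_add I5 K6, integral_add I6 K7, integral_add I7 K8, integral_add I8 I9]
  simp only [integral_const_mul]
  simp only [h.integral_UQ_mul hd]
  simp only [pow_zero, pow_one, mul_one, one_mul]
  simp only [MeasureTheory.integral_const, measure_univ, probReal_univ, ENNReal.toReal_one, smul_eq_mul,
    mul_one, one_mul]
  rw [h.EQ2, h.EQU2, h.EU4, h.EU3, h.EQU, h.EU2 (Finset.range S), h.EU2 (Finset.Ico S T),
    h.EQ (Finset.range S), h.EQ (Finset.Ico S T), h.EU (Finset.Ico S T),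
    Finset.card_range, Nat.card_Ico, Nat.cast_sub hST]
  field_simp
  ring

lemma var_diff_sV (h : IIDBlock Z μ₂ μ₃ μ₄) (S T : ℕ) (hS : 2 ≤ S) (hST : S ≤ T) :
    variance (fun ω => sV Z T ω - sV Z S ω) ℙ
      = (1/(S:ℝ) - 1/(T:ℝ)) * (μ₄ - 3 * μ₂ ^ 2)
        + 2 * (1/((S:ℝ)-1) - 1/((T:ℝ)-1)) * μ₂ ^ 2 := by
  have hT : 2 ≤ T := hS.trans hST
  have hS0 : (S:ℝ) ≠ 0 := Nat.cast_ne_zero.mpr (by omega)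
  have hT0 : (T:ℝ) ≠ 0 := Nat.cast_ne_zero.mpr (by omega)
  have hS2 : (2:ℝ) ≤ (S:ℝ) := by exact_mod_cast hS
  have hT2 : (2:ℝ) ≤ (T:ℝ) := by exact_mod_cast hT
  have hS1 : (S:ℝ) - 1 ≠ 0 := by intro hc; nlinarith
  have hT1 : (T:ℝ) - 1 ≠ 0 := by intro hc; nlinarith
  have hmem : MemLp (fun ω => sV Z T ω - sV Z S ω) 2 ℙ := by
    exact MemLp.sub (h.mem2_sV T) (h.mem2_sV S)
  rw [variance_eq_sub hmem]
  have e0 : (fun ω => sV Z T ω - sV Z S ω) ^ 2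
      = fun ω => sV Z T ω * sV Z T ω
        + ((-2:ℝ) * (sV Z S ω * sV Z T ω) + sV Z S ω * sV Z S ω) := by
    funext ω; simp only [Pi.pow_apply]; ring
  rw [e0]
  have I1 : Integrable (fun ω => sV Z T ω * sV Z T ω) ℙ :=
    memLp_mul2 (h.mem2_sV T) (h.mem2_sV T)
  have I2 : Integrable (fun ω => (-2:ℝ) * (sV Z S ω * sV Z T ω)) ℙ := by
    exact (memLp_mul2 (h.mem2_sV S) (h.mem2_sV T)).const_mul _
  have I3 : Integrable (fun ω => sV Z S ω * sV Z S ω) ℙ :=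
    memLp_mul2 (h.mem2_sV S) (h.mem2_sV S)
  have J23 : Integrable (fun ω => (-2:ℝ) * (sV Z S ω * sV Z T ω)
      + sV Z S ω * sV Z S ω) ℙ := I2.add I3
  rw [integral_add I1 J23, integral_add I2 I3, integral_const_mul _ _]
  have eT : ∫ ω, sV Z T ω * sV Z T ω
      = μ₂ ^ 2 + μ₄ / (T:ℝ) - ((T:ℝ) - 3) / ((T:ℝ) * ((T:ℝ) - 1)) * μ₂ ^ 2 := by
    rw [show (fun ω => sV Z T ω * sV Z T ω) = fun ω => (sV Z T ω) ^ 2 by funext ω; ring]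
    exact h.Esq_sV T hT
  have eS : ∫ ω, sV Z S ω * sV Z S ω
      = μ₂ ^ 2 + μ₄ / (S:ℝ) - ((S:ℝ) - 3) / ((S:ℝ) * ((S:ℝ) - 1)) * μ₂ ^ 2 := by
    rw [show (fun ω => sV Z S ω * sV Z S ω) = fun ω => (sV Z S ω) ^ 2 by funext ω; ring]
    exact h.Esq_sV S hS
  have eD : ∫ ω, sV Z T ω - sV Z S ω = 0 := by
    rw [integral_sub (h.int_sV T) (h.int_sV S), h.E_sV T hT, h.E_sV S hS]; ring
  rw [eT, eS, h.Eprod_sV S T hS hST, eD]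
  field_simp
  ring

end IIDBlock
end Blocks

/-- The sample-variance formula as a function of the (centered) sample values. -/
noncomputable def svf (S : ℕ) (y : ℕ → ℝ) : ℝ :=
  ((∑ t ∈ Finset.range S, y t ^ 2) - (∑ t ∈ Finset.range S, y t) ^ 2 / S) / ((S : ℝ) - 1)

lemma svf_congr {S : ℕ} {y y' : ℕ → ℝ} (h : ∀ t ∈ Finset.range S, y t = y' t) :
    svf S y = svf S y' := by
  unfold svf
  rw [Finset.sum_congr rfl fun t ht => by rw [h t ht], Finset.sum_congr rfl h]

lemma measurable_svf (S : ℕ) : Measurable fun y : ℕ → ℝ => svf S y := by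
  have h1 : Measurable fun y : ℕ → ℝ => ∑ t ∈ Finset.range S, y t ^ 2 :=
    Finset.measurable_sum _ fun t _ => (measurable_pi_apply t).pow_const 2
  have h2 : Measurable fun y : ℕ → ℝ => ∑ t ∈ Finset.range S, y t :=
    Finset.measurable_sum _ fun t _ => measurable_pi_apply t
  exact (h1.sub ((h2.pow_const 2).div_const _)).div_const _

lemma sV_eq_svf {Ω : Type*} (Z : ℕ → Ω → ℝ) (S : ℕ) (ω : Ω) :
    sV Z S ω = svf S fun t => Z t ω := rfl

lemma levelVar_eq_sV {Ω : Type*} (X : ℕ → ℕ → ℕ → Ω → ℝ) (μ : ℝ) (ℓ m S : ℕ)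
    (hS : 1 ≤ S) : levelVar X ℓ m S = sV (fun t ω => X ℓ m t ω - μ) S := by
  funext ω
  have hS0 : (S:ℝ) ≠ 0 := Nat.cast_ne_zero.mpr (by omega)
  have hmean : ∀ t, X ℓ m t ω - levelMean X ℓ m S ω
      = (X ℓ m t ω - μ) - (∑ u ∈ Finset.range S, (X ℓ m u ω - μ)) / S := by
    intro t
    simp only [levelMean, Finset.sum_sub_distrib, Finset.sum_const, Finset.card_range,
      nsmul_eq_mul]
    field_simp
    ring
  have e1 : ∀ t ∈ Finset.range S, (X ℓ m t ω - levelMean X ℓ m S ω) ^ 2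
      = (X ℓ m t ω - μ) ^ 2
        - (2 * ((∑ u ∈ Finset.range S, (X ℓ m u ω - μ)) / S)) * (X ℓ m t ω - μ)
        + ((∑ u ∈ Finset.range S, (X ℓ m u ω - μ)) / S) ^ 2 := fun t _ => by
    rw [hmean t]; ring
  simp only [levelVar, sV, Qsum, Usum]
  rw [Finset.sum_congr rfl e1, Finset.sum_add_distrib, Finset.sum_sub_distrib,
    ← Finset.mul_sum, Finset.sum_const, Finset.card_range, nsmul_eq_mul]
  congr 1
  field_simp
  ring

lemma mkBlock {Ω : Type*} [MeasureSpace Ω] [IsProbabilityMeasure (ℙ : Measure Ω)]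
    (X : ℕ → ℕ → ℕ → Ω → ℝ)
    (hmeas : ∀ ℓ m t, Measurable (X ℓ m t))
    (hindep : iIndepFun
      (fun p : ℕ × ℕ × ℕ => X p.1 p.2.1 p.2.2) ℙ)
    (hident : ∀ ℓ m t, IdentDistrib (X ℓ m t) (X 0 0 0) ℙ ℙ)
    (hL4 : ∀ ℓ m t, MemLp (X ℓ m t) 4 ℙ)
    (μ μ₂ μ₃ μ₄ : ℝ) (hμ : μ = ∫ ω, X 0 0 0 ω)
    (hμ₂ : μ₂ = ∫ ω, (X 0 0 0 ω - μ) ^ 2)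
    (hμ₃ : μ₃ = ∫ ω, (X 0 0 0 ω - μ) ^ 3)
    (hμ₄ : μ₄ = ∫ ω, (X 0 0 0 ω - μ) ^ 4)
    (ℓ m : ℕ) :
    IIDBlock (fun t ω => X ℓ m t ω - μ) μ₂ μ₃ μ₄ := by
  have hmeas' : ∀ p : ℕ × ℕ × ℕ, Measurable fun ω => X p.1 p.2.1 p.2.2 ω - μ :=
    fun p => (hmeas _ _ _).sub measurable_const
  have hind' : iIndepFun
      (fun (p : ℕ × ℕ × ℕ) ω => X p.1 p.2.1 p.2.2 ω - μ) ℙ := by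
    have := hindep.comp (fun _ => fun x : ℝ => x - μ)
      (fun _ => measurable_id.sub measurable_const)
    exact this
  constructor
  · exact fun t => (hmeas ℓ m t).sub measurable_const
  · intro A B hAB H K hH hK hHA hKB
    have hinj : Function.Injective (fun t : ℕ => (ℓ, m, t)) := by
      intro a b hab; simpa using hab
    have hd : Disjoint (A.image fun t => (ℓ, m, t)) (B.image fun t => (ℓ, m, t)) := by
      rw [Finset.disjoint_left]
      intro p hp hq
      obtain ⟨a, haA, rfl⟩ := Finset.mem_image.mp hp
      obtain ⟨b, hbB, hba⟩ := Finset.mem_image.mp hq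
      obtain rfl : b = a := hinj hba
      exact (Finset.disjoint_left.mp hAB haA) hbB
    have := indep_depOnly (fun (p : ℕ × ℕ × ℕ) ω => X p.1 p.2.1 p.2.2 ω - μ) hind' hmeas'
      (A.image fun t => (ℓ, m, t)) (B.image fun t => (ℓ, m, t)) hd
      (fun v => H fun t => v (ℓ, m, t)) (fun v => K fun t => v (ℓ, m, t))
      (hH.comp (measurable_pi_lambda _ fun t => measurable_pi_apply _))
      (hK.comp (measurable_pi_lambda _ fun t => measurable_pi_apply _))
      (fun v w hvw => hHA _ _ fun t ht => hvw _ (Finset.mem_image_of_mem _ ht))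
      (fun v w hvw => hKB _ _ fun t ht => hvw _ (Finset.mem_image_of_mem _ ht))
    exact this
  · exact fun t => (hL4 ℓ m t).sub (memLp_const μ)
  · intro t
    have hI : ∫ ω, X ℓ m t ω = μ := by rw [hμ]; exact (hident ℓ m t).integral_eq
    rw [integral_sub ((hL4 ℓ m t).integrable (by norm_num)) (integrable_const μ), hI]
    simp
  · intro t
    have := ((hident ℓ m t).comp
      (show Measurable fun x : ℝ => (x - μ) ^ 2 from (measurable_id.sub measurable_const).pow_const 2)).integral_eq
    rw [hμ₂]; exact this
  · intro t
    have := ((hident ℓ m t).comp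
      (show Measurable fun x : ℝ => (x - μ) ^ 3 from (measurable_id.sub measurable_const).pow_const 3)).integral_eq
    rw [hμ₃]; exact this
  · intro t
    have := ((hident ℓ m t).comp
      (show Measurable fun x : ℝ => (x - μ) ^ 4 from (measurable_id.sub measurable_const).pow_const 4)).integral_eq
    rw [hμ₄]; exact this

/-- The whole level-`ℓ` MLMC term as a function of the centered sample values. -/
noncomputable def HWf (T M : ℕ → ℕ) (ℓ : ℕ) (v : (ℕ × ℕ × ℕ) → ℝ) : ℝ :=
  if ℓ = 0 then (∑ m ∈ Finset.range (M 0), svf (T 0) fun t => v (0, m, t)) / (M 0 : ℝ)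
  else (∑ m ∈ Finset.range (M ℓ),
    (svf (T ℓ) (fun t => v (ℓ, m, t)) - svf (T (ℓ - 1)) fun t => v (ℓ, m, t))) / (M ℓ : ℝ)

def Aset (T M : ℕ → ℕ) (ℓ : ℕ) : Finset (ℕ × ℕ × ℕ) :=
  {ℓ} ×ˢ (Finset.range (M ℓ) ×ˢ Finset.range (T ℓ))

lemma mem_Aset {T M : ℕ → ℕ} {ℓ m t : ℕ} (hm : m < M ℓ) (ht : t < T ℓ) :
    (ℓ, m, t) ∈ Aset T M ℓ := by
  simp [Aset, Finset.mem_product, hm, ht]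

lemma Aset_disjoint (T M : ℕ → ℕ) {i j : ℕ} (hij : i ≠ j) :
    Disjoint (Aset T M i) (Aset T M j) := by
  rw [Finset.disjoint_left]
  intro p hp hq
  simp only [Aset, Finset.mem_product, Finset.mem_singleton] at hp hq
  exact hij (hp.1 ▸ hq.1)

lemma HWf_meas (T M : ℕ → ℕ) (ℓ : ℕ) : Measurable (HWf T M ℓ) := by
  unfold HWf
  split_ifs with h0
  · exact (Finset.measurable_sum _ fun m _ =>
      (measurable_svf (T 0)).comp (measurable_pi_lambda _ fun t =>
        measurable_pi_apply _)).div_const _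
  · refine (Finset.measurable_sum _ fun m _ => ?_).div_const _
    exact ((measurable_svf (T ℓ)).comp (measurable_pi_lambda _ fun t =>
      measurable_pi_apply _)).sub ((measurable_svf (T (ℓ - 1))).comp
        (measurable_pi_lambda _ fun t => measurable_pi_apply _))

lemma HWf_dep (T M : ℕ → ℕ) (ℓ : ℕ) (hTle : T (ℓ - 1) ≤ T ℓ)
    (v w : (ℕ × ℕ × ℕ) → ℝ) (hvw : ∀ p ∈ Aset T M ℓ, v p = w p) :
    HWf T M ℓ v = HWf T M ℓ w := by
  unfold HWf
  split_ifs with h0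
  · subst h0
    congr 1
    refine Finset.sum_congr rfl fun m hm => ?_
    refine svf_congr fun t ht => ?_
    exact hvw _ (mem_Aset (Finset.mem_range.mp hm) (Finset.mem_range.mp ht))
  · congr 1
    refine Finset.sum_congr rfl fun m hm => ?_
    have e1 : svf (T ℓ) (fun t => v (ℓ, m, t)) = svf (T ℓ) fun t => w (ℓ, m, t) :=
      svf_congr fun t ht =>
        hvw _ (mem_Aset (Finset.mem_range.mp hm) (Finset.mem_range.mp ht))
    have e2 : svf (T (ℓ - 1)) (fun t => v (ℓ, m, t)) = svf (T (ℓ - 1)) fun t => w (ℓ, m, t) :=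
      svf_congr fun t ht =>
        hvw _ (mem_Aset (Finset.mem_range.mp hm)
          (lt_of_lt_of_le (Finset.mem_range.mp ht) hTle))
    rw [e1, e2]

/-- Per-replicate block of indices, and the per-replicate function. -/
def Bset (T : ℕ → ℕ) (ℓ m : ℕ) : Finset (ℕ × ℕ × ℕ) :=
  {ℓ} ×ˢ ({m} ×ˢ Finset.range (T ℓ))

lemma mem_Bset {T : ℕ → ℕ} {ℓ m t : ℕ} (ht : t < T ℓ) : (ℓ, m, t) ∈ Bset T ℓ m := by
  simp [Bset, Finset.mem_product, ht]

lemma Bset_disjoint (T : ℕ → ℕ) (ℓ : ℕ) {i j : ℕ} (hij : i ≠ j) :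
    Disjoint (Bset T ℓ i) (Bset T ℓ j) := by
  rw [Finset.disjoint_left]
  intro p hp hq
  simp only [Bset, Finset.mem_product, Finset.mem_singleton] at hp hq
  exact hij (hp.2.1 ▸ hq.2.1)

noncomputable def Hsv (S ℓ m : ℕ) (v : (ℕ × ℕ × ℕ) → ℝ) : ℝ := svf S fun t => v (ℓ, m, t)

lemma Hsv_meas (S ℓ m : ℕ) : Measurable (Hsv S ℓ m) :=
  (measurable_svf S).comp (measurable_pi_lambda _ fun t => measurable_pi_apply _)

lemma Hsv_dep {T : ℕ → ℕ} (S ℓ m : ℕ) (hS : S ≤ T ℓ)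
    (v w : (ℕ × ℕ × ℕ) → ℝ) (hvw : ∀ p ∈ Bset T ℓ m, v p = w p) :
    Hsv S ℓ m v = Hsv S ℓ m w := by
  refine svf_congr fun t ht => ?_
  exact hvw _ (mem_Bset (lt_of_lt_of_le (Finset.mem_range.mp ht) hS))

/-- Variance of the telescoping MLMC variance estimator. -/
theorem mlmc_variance_estimator_variance
    {Ω : Type*} [MeasureSpace Ω] [IsProbabilityMeasure (ℙ : Measure Ω)]
    (L : ℕ) (T M : ℕ → ℕ)
    (hT0 : 2 ≤ T 0) (hTmono : ∀ ℓ < L, T ℓ < T (ℓ + 1)) (hM : ∀ ℓ ≤ L, 1 ≤ M ℓ)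
    (X : ℕ → ℕ → ℕ → Ω → ℝ)
    (hmeas : ∀ ℓ m t, Measurable (X ℓ m t))
    (hindep : iIndepFun
      (fun p : ℕ × ℕ × ℕ => X p.1 p.2.1 p.2.2) ℙ)
    (hident : ∀ ℓ m t, IdentDistrib (X ℓ m t) (X 0 0 0) ℙ ℙ)
    (hL4 : ∀ ℓ m t, MemLp (X ℓ m t) 4 ℙ)
    (μ μ₂ μ₄ : ℝ) (hμ : μ = ∫ ω, X 0 0 0 ω)
    (hμ₂ : μ₂ = ∫ ω, (X 0 0 0 ω - μ) ^ 2)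
    (hμ₄ : μ₄ = ∫ ω, (X 0 0 0 ω - μ) ^ 4) :
    variance (fun ω => (∑ m ∈ range (M 0), levelVar X 0 m (T 0) ω) / (M 0)
        + ∑ ℓ ∈ Icc 1 L, (∑ m ∈ range (M ℓ),
            (levelVar X ℓ m (T ℓ) ω - levelVar X ℓ m (T (ℓ - 1)) ω)) / (M ℓ)) ℙ
      = (1 / ((M 0 : ℝ) * T 0)) * (μ₄ - ((T 0 : ℝ) - 3) / ((T 0 : ℝ) - 1) * μ₂ ^ 2)
        + (∑ ℓ ∈ Icc 1 L, (1 / (M ℓ : ℝ)) * (1 / (T (ℓ - 1) : ℝ) - 1 / (T ℓ : ℝ))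
            * (μ₄ - 3 * μ₂ ^ 2))
        + ∑ ℓ ∈ Icc 1 L, (2 / (M ℓ : ℝ))
            * (1 / ((T (ℓ - 1) : ℝ) - 1) - 1 / ((T ℓ : ℝ) - 1)) * μ₂ ^ 2 := by
  classical
  -- basic facts about T and M
  have hTge : ∀ n, n ≤ L → 2 ≤ T n := by
    intro n hn
    induction n with
    | zero => exact hT0
    | succ k ih =>
      have h1 := hTmono k (by omega)
      have h2 := ih (by omega)
      omega
  have hTle : ∀ ℓ, 1 ≤ ℓ → ℓ ≤ L → T (ℓ - 1) ≤ T ℓ := by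
    intro ℓ h1 hL'
    have h := hTmono (ℓ - 1) (by omega)
    have e : ℓ - 1 + 1 = ℓ := by omega
    rw [e] at h
    omega
  -- centered variables
  set μ₃ : ℝ := ∫ ω, (X 0 0 0 ω - μ) ^ 3 with hμ₃
  have hblock : ∀ ℓ m, IIDBlock (fun t ω => X ℓ m t ω - μ) μ₂ μ₃ μ₄ :=
    fun ℓ m => mkBlock X hmeas hindep hident hL4 μ μ₂ μ₃ μ₄ hμ hμ₂ hμ₃ hμ₄ ℓ m
  have hmeas' : ∀ p : ℕ × ℕ × ℕ, Measurable fun ω => X p.1 p.2.1 p.2.2 ω - μ :=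
    fun p => (hmeas _ _ _).sub measurable_const
  have hind' : iIndepFun
      (fun (p : ℕ × ℕ × ℕ) ω => X p.1 p.2.1 p.2.2 ω - μ) ℙ := by
    have := hindep.comp (fun _ => fun x : ℝ => x - μ)
      (fun _ => measurable_id.sub measurable_const)
    exact this
  have h0notin : (0 : ℕ) ∉ Finset.Icc 1 L := by simp
  set G : ℕ → Ω → ℝ := fun ℓ ω => HWf T M ℓ fun p => X p.1 p.2.1 p.2.2 ω - μ with hGdef
  -- rewrite the estimator as a sum over levels
  have eEst : (fun ω => (∑ m ∈ range (M 0), levelVar X 0 m (T 0) ω) / (M 0)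
        + ∑ ℓ ∈ Icc 1 L, (∑ m ∈ range (M ℓ),
            (levelVar X ℓ m (T ℓ) ω - levelVar X ℓ m (T (ℓ - 1)) ω)) / (M ℓ))
      = ∑ ℓ ∈ insert 0 (Finset.Icc 1 L), G ℓ := by
    funext ω
    rw [Finset.sum_apply, Finset.sum_insert h0notin]
    congr 1
    · simp only [hGdef, HWf, if_pos]
      congr 1
      refine Finset.sum_congr rfl fun m _ => ?_
      rw [levelVar_eq_sV X μ 0 m (T 0) (by omega)]
      rfl
    · refine Finset.sum_congr rfl fun ℓ hℓ => ?_
      obtain ⟨h1, hL'⟩ := Finset.mem_Icc.mp hℓ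
      simp only [hGdef, HWf]
      rw [if_neg (by omega)]
      congr 1
      refine Finset.sum_congr rfl fun m _ => ?_
      rw [levelVar_eq_sV X μ ℓ m (T ℓ) (by have := hTge ℓ hL'; omega),
        levelVar_eq_sV X μ ℓ m (T (ℓ - 1)) (by have := hTge (ℓ - 1) (by omega); omega)]
      rfl
  rw [eEst]
  -- independence and integrability of the level terms
  have hGpair : Set.Pairwise ↑(insert 0 (Finset.Icc 1 L))
      fun i j => IndepFun (G i) (G j) ℙ := by
    intro i hi j hj hij
    have hiT : T (i - 1) ≤ T i := by
      rcases Finset.mem_insert.mp hi with rfl | h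
      · simp
      · obtain ⟨h1, hL'⟩ := Finset.mem_Icc.mp h
        exact hTle i h1 hL'
    have hjT : T (j - 1) ≤ T j := by
      rcases Finset.mem_insert.mp hj with rfl | h
      · simp
      · obtain ⟨h1, hL'⟩ := Finset.mem_Icc.mp h
        exact hTle j h1 hL'
    have := indep_depOnly (fun (p : ℕ × ℕ × ℕ) ω => X p.1 p.2.1 p.2.2 ω - μ) hind' hmeas'
      (Aset T M i) (Aset T M j) (Aset_disjoint T M hij) (HWf T M i) (HWf T M j)
      (HWf_meas T M i) (HWf_meas T M j) (HWf_dep T M i hiT) (HWf_dep T M j hjT)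
    simp only [hGdef]
    exact this
  have hGmem : ∀ ℓ ∈ insert 0 (Finset.Icc 1 L), MemLp (G ℓ) 2 ℙ := by
    intro ℓ hℓ
    rcases Finset.mem_insert.mp hℓ with rfl | hℓI
    · have e : G 0 = fun ω => ((M 0 : ℝ))⁻¹ *
          ∑ m ∈ Finset.range (M 0), sV (fun t ω' => X 0 m t ω' - μ) (T 0) ω := by
        funext ω
        simp only [hGdef, HWf, if_pos]
        rw [div_eq_mul_inv, mul_comm]
        rfl
      rw [e]
      exact MemLp.const_mul (memLp_finset_sum (f := fun m => sV (fun t ω' => X 0 m t ω' - μ) (T 0)) _ fun m _ => (hblock 0 m).mem2_sV (T 0)) _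
    · obtain ⟨h1, hL'⟩ := Finset.mem_Icc.mp hℓI
      have e : G ℓ = fun ω => ((M ℓ : ℝ))⁻¹ *
          ∑ m ∈ Finset.range (M ℓ), (sV (fun t ω' => X ℓ m t ω' - μ) (T ℓ) ω
            - sV (fun t ω' => X ℓ m t ω' - μ) (T (ℓ - 1)) ω) := by
        funext ω
        simp only [hGdef, HWf]
        rw [if_neg (by omega), div_eq_mul_inv, mul_comm]
        rfl
      rw [e]
      refine MemLp.const_mul (memLp_finset_sum (f := fun m ω => sV (fun t ω' => X ℓ m t ω' - μ) (T ℓ) ω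
            - sV (fun t ω' => X ℓ m t ω' - μ) (T (ℓ - 1)) ω) _ fun m _ => ?_) _
      exact MemLp.sub ((hblock ℓ m).mem2_sV (T ℓ)) ((hblock ℓ m).mem2_sV (T (ℓ - 1)))
  rw [IndepFun.variance_sum hGmem hGpair]
  -- variance of the level-0 term
  have hM0 : (M 0 : ℝ) ≠ 0 := Nat.cast_ne_zero.mpr (by have := hM 0 (Nat.zero_le L); omega)
  have hvar0 : variance (G 0) ℙ
      = (1 / (M 0 : ℝ)) * (μ₄ / (T 0 : ℝ)
          - ((T 0 : ℝ) - 3) / ((T 0 : ℝ) * ((T 0 : ℝ) - 1)) * μ₂ ^ 2) := by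
    have e : G 0 = fun ω => ((M 0 : ℝ))⁻¹ *
        ∑ m ∈ Finset.range (M 0), sV (fun t ω' => X 0 m t ω' - μ) (T 0) ω := by
      funext ω
      simp only [hGdef, HWf, if_pos]
      rw [div_eq_mul_inv, mul_comm]
      rfl
    rw [e, variance_const_mul]
    have e2 : (fun ω => ∑ m ∈ Finset.range (M 0), sV (fun t ω' => X 0 m t ω' - μ) (T 0) ω)
        = ∑ m ∈ Finset.range (M 0), sV (fun t ω' => X 0 m t ω' - μ) (T 0) := by
      funext ω
      rw [Finset.sum_apply]
    have hmemF : ∀ m ∈ Finset.range (M 0),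
        MemLp (sV (fun t ω' => X 0 m t ω' - μ) (T 0)) 2 ℙ :=
      fun m _ => (hblock 0 m).mem2_sV (T 0)
    have hpairF : Set.Pairwise ↑(Finset.range (M 0))
        fun i j => IndepFun (sV (fun t ω' => X 0 i t ω' - μ) (T 0))
          (sV (fun t ω' => X 0 j t ω' - μ) (T 0)) ℙ := by
      intro i _ j _ hij
      have := indep_depOnly (fun (p : ℕ × ℕ × ℕ) ω => X p.1 p.2.1 p.2.2 ω - μ) hind' hmeas'
        (Bset T 0 i) (Bset T 0 j) (Bset_disjoint T 0 hij)
        (Hsv (T 0) 0 i) (Hsv (T 0) 0 j) (Hsv_meas (T 0) 0 i) (Hsv_meas (T 0) 0 j)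
        (Hsv_dep (T 0) 0 i le_rfl) (Hsv_dep (T 0) 0 j le_rfl)
      exact this
    rw [e2, IndepFun.variance_sum hmemF hpairF,
      Finset.sum_congr rfl fun m _ => (hblock 0 m).var_sV (T 0) hT0,
      Finset.sum_const, Finset.card_range, nsmul_eq_mul]
    field_simp
  -- variance of the level-ℓ terms
  have hvarI : ∀ ℓ ∈ Finset.Icc 1 L, variance (G ℓ) ℙ
      = (1 / (M ℓ : ℝ)) * ((1 / (T (ℓ - 1) : ℝ) - 1 / (T ℓ : ℝ)) * (μ₄ - 3 * μ₂ ^ 2)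
          + 2 * (1 / ((T (ℓ - 1) : ℝ) - 1) - 1 / ((T ℓ : ℝ) - 1)) * μ₂ ^ 2) := by
    intro ℓ hℓ
    obtain ⟨h1, hL'⟩ := Finset.mem_Icc.mp hℓ
    have hMl : (M ℓ : ℝ) ≠ 0 := Nat.cast_ne_zero.mpr (by have := hM ℓ hL'; omega)
    have hS2 : 2 ≤ T (ℓ - 1) := hTge (ℓ - 1) (by omega)
    have hST : T (ℓ - 1) ≤ T ℓ := hTle ℓ h1 hL'
    have e : G ℓ = fun ω => ((M ℓ : ℝ))⁻¹ *
        ∑ m ∈ Finset.range (M ℓ), (sV (fun t ω' => X ℓ m t ω' - μ) (T ℓ) ω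
          - sV (fun t ω' => X ℓ m t ω' - μ) (T (ℓ - 1)) ω) := by
      funext ω
      simp only [hGdef, HWf]
      rw [if_neg (by omega), div_eq_mul_inv, mul_comm]
      rfl
    rw [e, variance_const_mul]
    have e2 : (fun ω => ∑ m ∈ Finset.range (M ℓ),
          (sV (fun t ω' => X ℓ m t ω' - μ) (T ℓ) ω
            - sV (fun t ω' => X ℓ m t ω' - μ) (T (ℓ - 1)) ω))
        = ∑ m ∈ Finset.range (M ℓ), fun ω => (sV (fun t ω' => X ℓ m t ω' - μ) (T ℓ) ω
            - sV (fun t ω' => X ℓ m t ω' - μ) (T (ℓ - 1)) ω) := by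
      funext ω
      rw [Finset.sum_apply]
    have hmemF : ∀ m ∈ Finset.range (M ℓ),
        MemLp (fun ω => sV (fun t ω' => X ℓ m t ω' - μ) (T ℓ) ω
          - sV (fun t ω' => X ℓ m t ω' - μ) (T (ℓ - 1)) ω) 2 ℙ := by
      intro m _
      exact MemLp.sub ((hblock ℓ m).mem2_sV (T ℓ)) ((hblock ℓ m).mem2_sV (T (ℓ - 1)))
    have hpairF : Set.Pairwise ↑(Finset.range (M ℓ))
        fun i j => IndepFun
          (fun ω => sV (fun t ω' => X ℓ i t ω' - μ) (T ℓ) ω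
            - sV (fun t ω' => X ℓ i t ω' - μ) (T (ℓ - 1)) ω)
          (fun ω => sV (fun t ω' => X ℓ j t ω' - μ) (T ℓ) ω
            - sV (fun t ω' => X ℓ j t ω' - μ) (T (ℓ - 1)) ω) ℙ := by
      intro i _ j _ hij
      have := indep_depOnly (fun (p : ℕ × ℕ × ℕ) ω => X p.1 p.2.1 p.2.2 ω - μ) hind' hmeas'
        (Bset T ℓ i) (Bset T ℓ j) (Bset_disjoint T ℓ hij)
        (fun v => Hsv (T ℓ) ℓ i v - Hsv (T (ℓ - 1)) ℓ i v)
        (fun v => Hsv (T ℓ) ℓ j v - Hsv (T (ℓ - 1)) ℓ j v)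
        ((Hsv_meas (T ℓ) ℓ i).sub (Hsv_meas (T (ℓ - 1)) ℓ i))
        ((Hsv_meas (T ℓ) ℓ j).sub (Hsv_meas (T (ℓ - 1)) ℓ j))
        (fun v w hvw => by
          rw [Hsv_dep (T ℓ) ℓ i le_rfl v w hvw, Hsv_dep (T (ℓ - 1)) ℓ i hST v w hvw])
        (fun v w hvw => by
          rw [Hsv_dep (T ℓ) ℓ j le_rfl v w hvw, Hsv_dep (T (ℓ - 1)) ℓ j hST v w hvw])
      exact this
    rw [e2, IndepFun.variance_sum hmemF hpairF,
      Finset.sum_congr rfl fun m _ =>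
        (hblock ℓ m).var_diff_sV (T (ℓ - 1)) (T ℓ) hS2 hST,
      Finset.sum_const, Finset.card_range, nsmul_eq_mul]
    field_simp
  -- put everything together
  rw [Finset.sum_insert h0notin, hvar0, Finset.sum_congr rfl hvarI]
  have hT0' : (T 0 : ℝ) ≠ 0 := Nat.cast_ne_zero.mpr (by omega)
  have hT02 : (2:ℝ) ≤ (T 0 : ℝ) := by exact_mod_cast hT0
  have hT01 : (T 0 : ℝ) - 1 ≠ 0 := by intro hc; nlinarith
  have h0eq : (1 / (M 0 : ℝ)) * (μ₄ / (T 0 : ℝ)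
        - ((T 0 : ℝ) - 3) / ((T 0 : ℝ) * ((T 0 : ℝ) - 1)) * μ₂ ^ 2)
      = (1 / ((M 0 : ℝ) * T 0)) * (μ₄ - ((T 0 : ℝ) - 3) / ((T 0 : ℝ) - 1) * μ₂ ^ 2) := by
    field_simp
  have hsplit : (∑ ℓ ∈ Finset.Icc 1 L, (1 / (M ℓ : ℝ))
        * ((1 / (T (ℓ - 1) : ℝ) - 1 / (T ℓ : ℝ)) * (μ₄ - 3 * μ₂ ^ 2)
          + 2 * (1 / ((T (ℓ - 1) : ℝ) - 1) - 1 / ((T ℓ : ℝ) - 1)) * μ₂ ^ 2))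
      = (∑ ℓ ∈ Finset.Icc 1 L, (1 / (M ℓ : ℝ)) * (1 / (T (ℓ - 1) : ℝ) - 1 / (T ℓ : ℝ))
            * (μ₄ - 3 * μ₂ ^ 2))
        + ∑ ℓ ∈ Finset.Icc 1 L, (2 / (M ℓ : ℝ))
            * (1 / ((T (ℓ - 1) : ℝ) - 1) - 1 / ((T ℓ : ℝ) - 1)) * μ₂ ^ 2 := by
    rw [← Finset.sum_add_distrib]
    exact Finset.sum_congr rfl fun ℓ _ => by ring
  rw [h0eq, hsplit]
  ring
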